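/- arXiv:1810.06653 — 9 statements merged into one kernel-verified Lean document; each statement's English description precedes it below -/
import Mathlib

section
/- Let R ∈ ℝ^{n×n} be row-stochastic with positive diagonal entries and let C ∈ ℝ^{n×n} be column-stochastic with positive diagonal entries. Assume the induced digraph 𝒢_R contains a spanning tree, the induced digraph 𝒢_{Cᵀ} contains a spanning tree, and ℛ_R ∩ ℛ_{Cᵀ} ≠ ∅. Then: (i) there exists exactly one nonnegative vector u ∈ ℝⁿ with uᵀR = uᵀ and ∑_i u_i = n; (ii) there exists exactly one nonnegative vector v ∈ ℝⁿ with Cv = v and ∑_i v_i = n; (iii) u_i > 0 if and only if i ∈ ℛ_R, and v_j > 0 if and only if j ∈ ℛ_{Cᵀ}; (iv) uᵀv > 0. -/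
open Matrix

/-- The set of roots of the digraph induced by a nonnegative matrix `M`, where there is an
edge from `j` to `i` iff `M i j > 0`.  A root is a vertex with a directed path to every
other vertex; `𝒢_M` contains a spanning tree iff this set is nonempty. -/
def rootSet {n : ℕ} (M : Matrix (Fin n) (Fin n) ℝ) : Set (Fin n) :=
  {r | ∀ i, Relation.ReflTransGen (fun a b => 0 < M b a) r i}

section core
variable {n : ℕ} {P : Matrix (Fin n) (Fin n) ℝ}

lemma sum_vecMul_eq (hrow : ∀ i, ∑ j, P i j = 1) (u : Fin n → ℝ) :
    ∑ j, Matrix.vecMul u P j = ∑ i, u i := by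
  have : ∀ j, Matrix.vecMul u P j = ∑ i, u i * P i j := fun j => rfl
  simp only [this]
  rw [Finset.sum_comm]
  simp [← Finset.mul_sum, hrow]

/-- support propagates backwards along graph edges (forwards along chain steps) -/
lemma supp_closed (hnn : ∀ i j, 0 ≤ P i j) (u : Fin n → ℝ) (hu : ∀ i, 0 ≤ u i)
    (hfix : Matrix.vecMul u P = u) {a b : Fin n}
    (hab : Relation.ReflTransGen (fun a b => 0 < P b a) a b) (hb : 0 < u b) : 0 < u a := by
  induction hab with
  | refl => exact hb
  | tail hpath hstep ih =>
    rename_i b c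
    -- hstep : 0 < P c b ; hb : 0 < u c ; goal after ih : 0 < u a, ih : 0 < u b → 0 < u a
    apply ih
    have h1 : u c * P c b ≤ ∑ i, u i * P i b := by
      apply Finset.single_le_sum (f := fun i => u i * P i b)
      · intro i _; exact mul_nonneg (hu i) (hnn i b)
      · exact Finset.mem_univ c
    have h2 : Matrix.vecMul u P b = ∑ i, u i * P i b := rfl
    have : 0 < u c * P c b := mul_pos hb hstep
    calc (0:ℝ) < u c * P c b := this
      _ ≤ ∑ i, u i * P i b := h1
      _ = u b := by rw [← h2, hfix]

lemma root_closed {r j : Fin n} (hr : r ∈ rootSet P) (hPrj : 0 < P r j) :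
    j ∈ rootSet P := fun i => (Relation.ReflTransGen.single (r := fun a b => 0 < P b a) hPrj).trans (hr i)

lemma stoch_support (hnn : ∀ i j, 0 ≤ P i j) (hrow : ∀ i, ∑ j, P i j = 1)
    (hroot : (rootSet P).Nonempty) (u : Fin n → ℝ) (hu : ∀ i, 0 ≤ u i)
    (hfix : Matrix.vecMul u P = u) (hne : ∃ i, 0 < u i) :
    ∀ i, 0 < u i ↔ i ∈ rootSet P := by
  classical
  obtain ⟨r, hr⟩ := hroot
  -- roots are in the support
  have roots_supp : ∀ s, s ∈ rootSet P → 0 < u s := by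
    intro s hs
    obtain ⟨i, hi⟩ := hne
    exact supp_closed hnn u hu hfix (hs i) hi
  -- the finset of roots
  set A : Finset (Fin n) := Finset.univ.filter (· ∈ rootSet P) with hA
  have memA : ∀ i, i ∈ A ↔ i ∈ rootSet P := by
    intro i; simp [hA]
  -- for i a root, row sum over A is 1
  have hrowA : ∀ i ∈ A, ∑ j ∈ A, P i j = 1 := by
    intro i hi
    rw [← hrow i]
    apply Finset.sum_subset (Finset.subset_univ A)
    intro j _ hj
    by_contra h
    have : 0 < P i j := lt_of_le_of_ne (hnn i j) (Ne.symm h)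
    exact hj ((memA j).mpr (root_closed ((memA i).mp hi) this))
  -- mass identity
  have hmass : ∀ i ∉ A, u i * ∑ j ∈ A, P i j = 0 := by
    have h1 : ∑ j ∈ A, u j = ∑ i, u i * ∑ j ∈ A, P i j := by
      have : ∀ j ∈ A, u j = ∑ i, u i * P i j := fun j _ => (congrFun hfix j).symm
      rw [Finset.sum_congr rfl this, Finset.sum_comm]
      simp [Finset.mul_sum]
    have h2 : ∑ i, u i * ∑ j ∈ A, P i j
        = ∑ i ∈ A, u i * ∑ j ∈ A, P i j + ∑ i ∈ Aᶜ, u i * ∑ j ∈ A, P i j :=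
      (Finset.sum_add_sum_compl A _).symm
    have h3 : ∑ i ∈ A, u i * ∑ j ∈ A, P i j = ∑ i ∈ A, u i := by
      apply Finset.sum_congr rfl
      intro i hi; rw [hrowA i hi, mul_one]
    have h4 : ∑ i ∈ Aᶜ, u i * ∑ j ∈ A, P i j = 0 := by
      have := h1
      rw [h2, h3] at this
      linarith
    intro i hi
    have hiA : i ∈ Aᶜ := Finset.mem_compl.mpr hi
    have hnonneg : ∀ i ∈ Aᶜ, 0 ≤ u i * ∑ j ∈ A, P i j := by
      intro i _
      exact mul_nonneg (hu i) (Finset.sum_nonneg fun j _ => hnn i j)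
    exact (Finset.sum_eq_zero_iff_of_nonneg hnonneg).mp h4 i hiA
  -- support is contained in roots
  have supp_roots : ∀ i, 0 < u i → i ∈ rootSet P := by
    intro i hui
    by_contra hiA
    -- walk from r to i in the graph; derive contradiction by induction
    have key : ∀ x, Relation.ReflTransGen (fun a b => 0 < P b a) r x →
        0 < u x → x ∉ rootSet P → False := by
      intro x hpath
      induction hpath with
      | refl => intro _ hxr; exact hxr hr
      | tail hpath hstep ih =>
        rename_i b c
        intro huc hcA
        by_cases hb : b ∈ rootSet P
        · -- crossing: c ∉ roots, P c b > 0, b ∈ roots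
          have hsge : 0 < ∑ j ∈ A, P c j := by
            have : P c b ≤ ∑ j ∈ A, P c j := by
              apply Finset.single_le_sum (f := fun j => P c j)
                (fun j _ => hnn c j) ((memA b).mpr hb)
            linarith
          have := hmass c (fun h => hcA ((memA c).mp h))
          nlinarith
        · apply ih _ hb
          have h1 : u c * P c b ≤ ∑ i, u i * P i b := by
            apply Finset.single_le_sum (f := fun i => u i * P i b)
              (fun i _ => mul_nonneg (hu i) (hnn i b)) (Finset.mem_univ c)
          have h2 : Matrix.vecMul u P b = ∑ i, u i * P i b := rfl
          have := mul_pos huc hstep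
          calc (0:ℝ) < u c * P c b := this
            _ ≤ ∑ i, u i * P i b := h1
            _ = u b := by rw [← h2, hfix]
    exact key i (hr i) hui hiA
  intro i
  exact ⟨supp_roots i, roots_supp i⟩

end core

section core2
variable {n : ℕ} {P : Matrix (Fin n) (Fin n) ℝ}

lemma stoch_main (hnn : ∀ i j, 0 ≤ P i j) (hrow : ∀ i, ∑ j, P i j = 1)
    (hroot : (rootSet P).Nonempty) :
    (∃! u : Fin n → ℝ, (∀ i, 0 ≤ u i) ∧ Matrix.vecMul u P = u ∧ ∑ i, u i = n) ∧
    ∀ u : Fin n → ℝ, ((∀ i, 0 ≤ u i) ∧ Matrix.vecMul u P = u ∧ ∑ i, u i = n) →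
      ∀ i, 0 < u i ↔ i ∈ rootSet P := by
  classical
  obtain ⟨r, hr⟩ := hroot
  have hn : 0 < n := r.pos
  have hn' : (0:ℝ) < (n:ℝ) := by exact_mod_cast hn
  -- any vector satisfying the conditions is nonzero somewhere
  have hpos_of : ∀ u : Fin n → ℝ, (∀ i, 0 ≤ u i) → (∑ i, u i = n) → ∃ i, 0 < u i := by
    intro u hu hsum
    by_contra h
    push_neg at h
    have : ∀ i, u i = 0 := fun i => le_antisymm (h i) (hu i)
    simp [this] at hsum
    exact absurd hsum.symm (ne_of_gt hn')
  have hchar : ∀ u : Fin n → ℝ, ((∀ i, 0 ≤ u i) ∧ Matrix.vecMul u P = u ∧ ∑ i, u i = n) →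
      ∀ i, 0 < u i ↔ i ∈ rootSet P := by
    rintro u ⟨hu, hfix, hsum⟩
    exact stoch_support hnn hrow ⟨r, hr⟩ u hu hfix (hpos_of u hu hsum)
  -- EXISTENCE
  have hexists : ∃ u : Fin n → ℝ, (∀ i, 0 ≤ u i) ∧ Matrix.vecMul u P = u ∧ ∑ i, u i = n := by
    -- 1 is an eigenvalue of P, hence of Pᵀ
    have hone : (P - 1).mulVec (fun _ => 1) = 0 := by
      funext i
      have : P.mulVec (fun _ => 1) i = ∑ j, P i j := by
        simp [Matrix.mulVec, dotProduct]
      simp [Matrix.sub_mulVec, this, hrow i, Matrix.one_mulVec]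
    have hne1 : (fun _ : Fin n => (1:ℝ)) ≠ 0 := by
      intro h
      have := congrFun h ⟨0, hn⟩
      simp at this
    have hdet : (P - 1).det = 0 := by
      haveI : NeZero n := ⟨hn.ne'⟩
      exact Matrix.exists_mulVec_eq_zero_iff.mp ⟨_, hne1, hone⟩
    have hdetT : (Pᵀ - 1).det = 0 := by
      have : (Pᵀ - 1) = (P - 1)ᵀ := by
        rw [Matrix.transpose_sub, Matrix.transpose_one]
      rw [this, Matrix.det_transpose, hdet]
    haveI : NeZero n := ⟨hn.ne'⟩
    obtain ⟨w, hw0, hww⟩ := Matrix.exists_mulVec_eq_zero_iff.mpr hdetT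
    have hwfix : Matrix.vecMul w P = w := by
      have h1 : Pᵀ.mulVec w = w := by
        have := hww
        rw [Matrix.sub_mulVec, Matrix.one_mulVec] at this
        have := sub_eq_zero.mp this
        exact this
      rw [← Matrix.mulVec_transpose, h1]
    -- absolute value is also a fixed vector
    set a : Fin n → ℝ := fun i => |w i| with ha
    have hptwise : ∀ j, a j ≤ Matrix.vecMul a P j := by
      intro j
      have h1 : Matrix.vecMul a P j = ∑ i, |w i| * P i j := rfl
      have h2 : a j = |∑ i, w i * P i j| := by
        rw [ha]
        have : Matrix.vecMul w P j = ∑ i, w i * P i j := rfl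
        rw [← this, hwfix]
      rw [h1, h2]
      calc |∑ i, w i * P i j| ≤ ∑ i, |w i * P i j| := Finset.abs_sum_le_sum_abs _ _
        _ = ∑ i, |w i| * P i j := by
            apply Finset.sum_congr rfl
            intro i _
            rw [abs_mul, abs_of_nonneg (hnn i j)]
    have hsums : ∑ j, Matrix.vecMul a P j = ∑ j, a j := sum_vecMul_eq hrow a
    have hafix : Matrix.vecMul a P = a := by
      funext j
      have key : ∑ j, (Matrix.vecMul a P j - a j) = 0 := by
        rw [Finset.sum_sub_distrib, hsums, sub_self]
      have := (Finset.sum_eq_zero_iff_of_nonneg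
        (fun j _ => sub_nonneg.mpr (hptwise j))).mp key j (Finset.mem_univ j)
      linarith
    have hann : ∀ i, 0 ≤ a i := fun i => abs_nonneg _
    have hane : ∃ i, 0 < a i := by
      by_contra h
      push_neg at h
      apply hw0
      funext i
      show w i = 0
      exact abs_eq_zero.mp (le_antisymm (h i) (hann i))
    have htot : 0 < ∑ i, a i := by
      obtain ⟨i, hi⟩ := hane
      exact Finset.sum_pos' (fun i _ => hann i) ⟨i, Finset.mem_univ i, hi⟩
    set c : ℝ := n / ∑ i, a i with hc
    have hcpos : 0 < c := div_pos hn' htot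
    refine ⟨fun i => c * a i, fun i => mul_nonneg hcpos.le (hann i), ?_, ?_⟩
    · funext j
      have h1 : Matrix.vecMul (fun i => c * a i) P j = ∑ i, (c * a i) * P i j := rfl
      rw [h1]
      have : ∑ i, (c * a i) * P i j = c * ∑ i, a i * P i j := by
        rw [Finset.mul_sum]; apply Finset.sum_congr rfl; intro i _; ring
      rw [this]
      have h2 : Matrix.vecMul a P j = ∑ i, a i * P i j := rfl
      rw [← h2, hafix]
    · rw [← Finset.mul_sum, hc, div_mul_cancel₀]
      exact htot.ne'
  -- UNIQUENESS
  obtain ⟨u, hu⟩ := hexists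
  refine ⟨⟨u, hu, ?_⟩, hchar⟩
  intro u' hu'
  -- show u' = u
  obtain ⟨hu'nn, hu'fix, hu'sum⟩ := hu'
  obtain ⟨hunn, hufix, husum⟩ := hu
  have hchar' := hchar u' ⟨hu'nn, hu'fix, hu'sum⟩
  have hcharu := hchar u ⟨hunn, hufix, husum⟩
  -- u positive on roots, zero off roots; same for u'
  set A : Finset (Fin n) := Finset.univ.filter (· ∈ rootSet P) with hA
  have memA : ∀ i, i ∈ A ↔ i ∈ rootSet P := by intro i; simp [hA]
  have hAne : A.Nonempty := ⟨r, (memA r).mpr hr⟩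
  obtain ⟨i0, hi0A, hi0min⟩ := Finset.exists_min_image A (fun i => u' i / u i) hAne
  set t : ℝ := u' i0 / u i0 with ht
  have hui0 : 0 < u i0 := (hcharu i0).mpr ((memA i0).mp hi0A)
  set w : Fin n → ℝ := fun i => u' i - t * u i with hw
  have hwfix : Matrix.vecMul w P = w := by
    funext j
    have h1 : Matrix.vecMul w P j = ∑ i, (u' i - t * u i) * P i j := rfl
    rw [h1]
    have e1 : ∑ i, (u' i - t * u i) * P i j
        = ∑ i, (u' i * P i j - t * (u i * P i j)) := by
      apply Finset.sum_congr rfl; intro i _; ring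
    rw [e1, Finset.sum_sub_distrib, ← Finset.mul_sum]
    have h2 : (∑ i, u' i * P i j) = u' j := congrFun hu'fix j
    have h3 : (∑ i, u i * P i j) = u j := congrFun hufix j
    rw [h2, h3]
  have hwnn : ∀ i, 0 ≤ w i := by
    intro i
    by_cases hi : i ∈ rootSet P
    · have hupos : 0 < u i := (hcharu i).mpr hi
      have := hi0min i ((memA i).mpr hi)
      rw [hw]
      simp only
      rw [sub_nonneg]
      calc t * u i ≤ (u' i / u i) * u i := by
            apply mul_le_mul_of_nonneg_right this hupos.le
        _ = u' i := div_mul_cancel₀ _ hupos.ne'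
    · have h1 : u' i = 0 := by
        have := mt (hchar' i).mp hi
        push_neg at this
        linarith [hu'nn i]
      have h2 : u i = 0 := by
        have := mt (hcharu i).mp hi
        push_neg at this
        linarith [hunn i]
      simp [hw, h1, h2]
  have hwi0 : w i0 = 0 := by
    simp only [hw, ht]
    rw [div_mul_cancel₀ _ hui0.ne', sub_self]
  have hwzero : w = 0 := by
    by_contra hne
    have : ∃ i, 0 < w i := by
      by_contra h
      push_neg at h
      exact hne (funext fun i => le_antisymm (h i) (hwnn i))
    obtain ⟨i, hi⟩ := this
    have : 0 < w i0 := supp_closed hnn w hwnn hwfix (((memA i0).mp hi0A) i) hi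
    rw [hwi0] at this
    exact lt_irrefl 0 this
  have ht1 : t = 1 := by
    have : ∀ i, u' i = t * u i := by
      intro i
      have := congrFun hwzero i
      simp only [hw, Pi.zero_apply] at this
      linarith
    have hsum : ∑ i, u' i = t * ∑ i, u i := by
      rw [Finset.mul_sum]
      exact Finset.sum_congr rfl fun i _ => this i
    rw [hu'sum, husum] at hsum
    have h0 : (t - 1) * (n:ℝ) = 0 := by linarith
    rcases mul_eq_zero.mp h0 with h | h
    · linarith
    · exact absurd h hn'.ne'
  funext i
  have := congrFun hwzero i
  simp only [hw, Pi.zero_apply, ht1] at this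
  linarith
end core2


/-- Existence/uniqueness and positivity structure of the Perron
eigenvectors `u` (left, for the row-stochastic `R`) and `v` (right, for the
column-stochastic `C`), with `uᵀv > 0`. -/
theorem perron_vectors_push_pull {n : ℕ}
    (R C : Matrix (Fin n) (Fin n) ℝ)
    (hRnonneg : ∀ i j, 0 ≤ R i j) (hRrow : ∀ i, ∑ j, R i j = 1)
    (hRdiag : ∀ i, 0 < R i i)
    (hCnonneg : ∀ i j, 0 ≤ C i j) (hCcol : ∀ j, ∑ i, C i j = 1)
    (hCdiag : ∀ i, 0 < C i i)
    (hRtree : (rootSet R).Nonempty)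
    (hCtree : (rootSet Cᵀ).Nonempty)
    (hcommon : (rootSet R ∩ rootSet Cᵀ).Nonempty) :
    (∃! u : Fin n → ℝ, (∀ i, 0 ≤ u i) ∧ Matrix.vecMul u R = u ∧ ∑ i, u i = n) ∧
    (∃! v : Fin n → ℝ, (∀ i, 0 ≤ v i) ∧ C.mulVec v = v ∧ ∑ i, v i = n) ∧
    (∀ u v : Fin n → ℝ,
      ((∀ i, 0 ≤ u i) ∧ Matrix.vecMul u R = u ∧ ∑ i, u i = n) →
      ((∀ i, 0 ≤ v i) ∧ C.mulVec v = v ∧ ∑ i, v i = n) →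
      (∀ i, 0 < u i ↔ i ∈ rootSet R) ∧
      (∀ j, 0 < v j ↔ j ∈ rootSet Cᵀ) ∧
      0 < u ⬝ᵥ v) := by
  have hCTnn : ∀ i j, 0 ≤ Cᵀ i j := fun i j => hCnonneg j i
  have hCTrow : ∀ i, ∑ j, Cᵀ i j = 1 := fun i => hCcol i
  have hRmain := stoch_main hRnonneg hRrow hRtree
  have hCmain := stoch_main hCTnn hCTrow hCtree
  have hequiv : ∀ v : Fin n → ℝ, C.mulVec v = v ↔ Matrix.vecMul v Cᵀ = v := by
    intro v; rw [Matrix.vecMul_transpose]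
  refine ⟨hRmain.1, ?_, ?_⟩
  · obtain ⟨⟨v, hv, hvu⟩, _⟩ := hCmain
    exact ⟨v, ⟨hv.1, (hequiv v).mpr hv.2.1, hv.2.2⟩,
      fun y hy => hvu y ⟨hy.1, (hequiv y).mp hy.2.1, hy.2.2⟩⟩
  · intro u v hu hv
    have h1 := hRmain.2 u hu
    have h2 := hCmain.2 v ⟨hv.1, (hequiv v).mp hv.2.1, hv.2.2⟩
    refine ⟨h1, h2, ?_⟩
    obtain ⟨r, hr1, hr2⟩ := hcommon
    have hrpos := mul_pos ((h1 r).mpr hr1) ((h2 r).mpr hr2)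
    show 0 < ∑ i, u i * v i
    exact Finset.sum_pos' (fun i _ => mul_nonneg (hu.1 i) (hv.1 i))
      ⟨r, Finset.mem_univ r, hrpos⟩
end

section
/- Let R ∈ ℝ^{n×n} be row-stochastic with positive diagonal entries whose induced digraph 𝒢_R contains a spanning tree, and let u ∈ ℝⁿ be nonnegative with uᵀR = uᵀ and uᵀ𝟙 = n. Let C ∈ ℝ^{n×n} be column-stochastic with positive diagonal entries such that 𝒢_{Cᵀ} contains a spanning tree, and let v ∈ ℝⁿ be nonnegative with Cv = v and 𝟙ᵀv = n. Then there exist K ≥ 0 and ρ ∈ [0,1) such that for all k ≥ 0 and all indices i, j: |(R^k)_{ij} − u_j/n| ≤ K ρ^k and |(C^k)_{ij} − v_i/n| ≤ K ρ^k; i.e., R^k → 𝟙uᵀ/n and C^k → v𝟙ᵀ/n at a linear (geometric) rate. -/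
open Matrix Finset

section Aux
variable {n : ℕ}

lemma aux_upper (hne : (Finset.univ : Finset (Fin n)).Nonempty)
    (a x : Fin n → ℝ) (r : Fin n) (δ : ℝ)
    (hnn : ∀ l, 0 ≤ a l) (hrow : ∑ l, a l = 1) (hcol : δ ≤ a r) :
    ∑ l, a l * x l ≤ δ * x r + (1 - δ) * univ.sup' hne x := by
  set M := univ.sup' hne x with hM
  have hxM : ∀ l, x l ≤ M := fun l => Finset.le_sup' x (mem_univ l)
  have h1 : ∑ l, a l * x l = (∑ l, a l * (x l - M)) + M := by
    rw [Finset.sum_congr rfl (fun l _ => by ring : ∀ l ∈ univ, a l * (x l - M) = a l * x l - a l * M),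
      Finset.sum_sub_distrib, ← Finset.sum_mul, hrow]
    ring
  have h2 : ∑ l, a l * (x l - M) ≤ a r * (x r - M) := by
    rw [← Finset.add_sum_erase _ _ (mem_univ r)]
    have : ∑ l ∈ univ.erase r, a l * (x l - M) ≤ 0 :=
      Finset.sum_nonpos (fun l _ => mul_nonpos_of_nonneg_of_nonpos (hnn l) (by linarith [hxM l]))
    linarith
  have h3 : a r * (x r - M) ≤ δ * (x r - M) :=
    mul_le_mul_of_nonpos_right hcol (by linarith [hxM r])
  nlinarith [h1, h2, h3]

lemma aux_lower (hne : (Finset.univ : Finset (Fin n)).Nonempty)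
    (a x : Fin n → ℝ) (r : Fin n) (δ : ℝ)
    (hnn : ∀ l, 0 ≤ a l) (hrow : ∑ l, a l = 1) (hcol : δ ≤ a r) :
    δ * x r + (1 - δ) * univ.inf' hne x ≤ ∑ l, a l * x l := by
  set m := univ.inf' hne x with hm
  have hxm : ∀ l, m ≤ x l := fun l => Finset.inf'_le x (mem_univ l)
  have h1 : ∑ l, a l * x l = (∑ l, a l * (x l - m)) + m := by
    rw [Finset.sum_congr rfl (fun l _ => by ring : ∀ l ∈ univ, a l * (x l - m) = a l * x l - a l * m),
      Finset.sum_sub_distrib, ← Finset.sum_mul, hrow]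
    ring
  have h2 : a r * (x r - m) ≤ ∑ l, a l * (x l - m) := by
    rw [← Finset.add_sum_erase _ _ (mem_univ r)]
    have : 0 ≤ ∑ l ∈ univ.erase r, a l * (x l - m) :=
      Finset.sum_nonneg (fun l _ => mul_nonneg (hnn l) (by linarith [hxm l]))
    linarith
  have h3 : δ * (x r - m) ≤ a r * (x r - m) :=
    mul_le_mul_of_nonneg_right hcol (by linarith [hxm r])
  nlinarith [h1, h2, h3]

lemma aux_contract (hne : (Finset.univ : Finset (Fin n)).Nonempty)
    (A P : Matrix (Fin n) (Fin n) ℝ) (r : Fin n) (δ : ℝ)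
    (hnn : ∀ i j, 0 ≤ A i j) (hrow : ∀ i, ∑ l, A i l = 1) (hcol : ∀ i, δ ≤ A i r)
    (j : Fin n) :
    univ.sup' hne (fun i => (A * P) i j) - univ.inf' hne (fun i => (A * P) i j)
      ≤ (1 - δ) * (univ.sup' hne (fun l => P l j) - univ.inf' hne (fun l => P l j)) := by
  have hup : univ.sup' hne (fun i => (A * P) i j)
      ≤ δ * P r j + (1 - δ) * univ.sup' hne (fun l => P l j) := by
    apply Finset.sup'_le
    intro i _
    rw [Matrix.mul_apply]
    exact aux_upper hne (fun l => A i l) (fun l => P l j) r δ (fun l => hnn i l) (hrow i) (hcol i)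
  have hlo : δ * P r j + (1 - δ) * univ.inf' hne (fun l => P l j)
      ≤ univ.inf' hne (fun i => (A * P) i j) := by
    apply Finset.le_inf'
    intro i _
    rw [Matrix.mul_apply]
    exact aux_lower hne (fun l => A i l) (fun l => P l j) r δ (fun l => hnn i l) (hrow i) (hcol i)
  linarith

lemma pow_nonneg' (R : Matrix (Fin n) (Fin n) ℝ) (hnn : ∀ i j, 0 ≤ R i j) :
    ∀ k i j, 0 ≤ (R ^ k) i j := by
  intro k
  induction k with
  | zero => intro i j; by_cases h : i = j <;> simp [Matrix.one_apply, h]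
  | succ k ih =>
    intro i j
    rw [pow_succ, Matrix.mul_apply]
    exact Finset.sum_nonneg fun l _ => mul_nonneg (ih i l) (hnn l j)

lemma pow_rowsum (R : Matrix (Fin n) (Fin n) ℝ) (hrow : ∀ i, ∑ j, R i j = 1) :
    ∀ k i, ∑ j, (R ^ k) i j = 1 := by
  intro k
  induction k with
  | zero => intro i; simp [Matrix.one_apply]
  | succ k ih =>
    intro i
    simp only [pow_succ, Matrix.mul_apply]
    rw [Finset.sum_comm]
    have : ∀ l ∈ univ, ∑ j, (R ^ k) i l * R l j = (R ^ k) i l := by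
      intro l _
      rw [← Finset.mul_sum, hrow l, mul_one]
    rw [Finset.sum_congr rfl this]
    exact ih i

lemma powEntry_le_one (R : Matrix (Fin n) (Fin n) ℝ) (hnn : ∀ i j, 0 ≤ R i j)
    (hrow : ∀ i, ∑ j, R i j = 1) (k : ℕ) (i j : Fin n) : (R ^ k) i j ≤ 1 := by
  rw [← pow_rowsum R hrow k i]
  exact Finset.single_le_sum (fun l _ => pow_nonneg' R hnn k i l) (mem_univ j)

lemma pos_col_pow (R : Matrix (Fin n) (Fin n) ℝ) (hnn : ∀ i j, 0 ≤ R i j)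
    (hdiag : ∀ i, 0 < R i i) (r : Fin n) (hr : r ∈ rootSet R) :
    ∃ M : ℕ, 0 < M ∧ ∀ i, 0 < (R ^ M) i r := by
  have hexists : ∀ i, ∃ k, 0 < (R ^ k) i r := by
    intro i
    induction hr i with
    | refl => exact ⟨0, by simp⟩
    | @tail b c _ hbc ih =>
      obtain ⟨k, hk⟩ := ih
      refine ⟨k + 1, ?_⟩
      rw [pow_succ', Matrix.mul_apply]
      have h2 : R c b * (R ^ k) b r ≤ ∑ l, R c l * (R ^ k) l r :=
        Finset.single_le_sum
          (fun l _ => mul_nonneg (hnn c l) (pow_nonneg' R hnn k l r)) (mem_univ b)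
      nlinarith [mul_pos hbc hk]
  have step : ∀ k i, 0 < (R ^ k) i r → 0 < (R ^ (k + 1)) i r := by
    intro k i h
    rw [pow_succ', Matrix.mul_apply]
    have h2 : R i i * (R ^ k) i r ≤ ∑ l, R i l * (R ^ k) l r :=
      Finset.single_le_sum
        (fun l _ => mul_nonneg (hnn i l) (pow_nonneg' R hnn k l r)) (mem_univ i)
    nlinarith [mul_pos (hdiag i) h]
  have mono : ∀ k m i, k ≤ m → 0 < (R ^ k) i r → 0 < (R ^ m) i r := by
    intro k m i hkm h
    induction m, hkm using Nat.le_induction with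
    | base => exact h
    | succ m _ ih => exact step m i ih
  choose f hf using hexists
  refine ⟨(univ.sup f) + 1, Nat.succ_pos _, fun i => ?_⟩
  exact mono (f i) _ i (le_trans (Finset.le_sup (mem_univ i)) (Nat.le_succ _)) (hf i)

lemma main_row (hn : 0 < n) (R : Matrix (Fin n) (Fin n) ℝ) (u : Fin n → ℝ)
    (hnn : ∀ i j, 0 ≤ R i j) (hrow : ∀ i, ∑ j, R i j = 1)
    (hdiag : ∀ i, 0 < R i i) (htree : (rootSet R).Nonempty)
    (hu : ∀ i, 0 ≤ u i) (huR : Matrix.vecMul u R = u) (husum : ∑ i, u i = n) :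
    ∃ K ρ : ℝ, 0 ≤ K ∧ 0 ≤ ρ ∧ ρ < 1 ∧
      ∀ (k : ℕ) (i j : Fin n), |(R ^ k) i j - u j / n| ≤ K * ρ ^ k := by
  haveI : Nonempty (Fin n) := Fin.pos_iff_nonempty.mp hn
  have hne : (univ : Finset (Fin n)).Nonempty := univ_nonempty
  obtain ⟨r, hr⟩ := htree
  obtain ⟨M, hM0, hMpos⟩ := pos_col_pow R hnn hdiag r hr
  set δ : ℝ := min (univ.inf' hne (fun i => (R ^ M) i r)) (1/2) with hδdef
  have hδpos : 0 < δ := by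
    apply lt_min _ (by norm_num)
    exact (Finset.lt_inf'_iff hne).mpr (fun i _ => hMpos i)
  have hδhalf : δ ≤ 1/2 := min_le_right _ _
  have hcolM : ∀ i, δ ≤ (R ^ M) i r :=
    fun i => le_trans (min_le_left _ _) (Finset.inf'_le _ (mem_univ i))
  set σ : ℝ := 1 - δ with hσdef
  have hσ0 : 0 < σ := by simp only [hσdef]; linarith
  have hσ1 : σ < 1 := by simp only [hσdef]; linarith
  have hPnn := pow_nonneg' R hnn
  have hProw := pow_rowsum R hrow
  set osc : ℕ → Fin n → ℝ := fun k j =>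
    univ.sup' hne (fun i => (R ^ k) i j) - univ.inf' hne (fun i => (R ^ k) i j) with hoscdef
  have osc_bound : ∀ k j, osc k j ≤ σ ^ (k / M) := by
    intro k
    induction k using Nat.strong_induction_on with
    | _ k ih =>
      intro j
      by_cases hk : k < M
      · rw [Nat.div_eq_of_lt hk, pow_zero]
        have h1 : univ.sup' hne (fun i => (R ^ k) i j) ≤ 1 :=
          Finset.sup'_le _ _ (fun i _ => powEntry_le_one R hnn hrow k i j)
        have h2 : (0:ℝ) ≤ univ.inf' hne (fun i => (R ^ k) i j) :=
          Finset.le_inf' _ _ (fun i _ => hPnn k i j)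
        simp only [hoscdef]
        linarith
      · push_neg at hk
        have hks : R ^ k = R ^ M * R ^ (k - M) := by
          rw [← pow_add]; congr 1; omega
        have hc := aux_contract hne (R ^ M) (R ^ (k - M)) r δ (hPnn M) (hProw M) hcolM j
        have hrec := ih (k - M) (by omega) j
        have hdiv : k / M = (k - M) / M + 1 := Nat.div_eq_sub_div hM0 hk
        have hstep : osc k j ≤ σ * osc (k - M) j := by
          simp only [hoscdef, hσdef, hks]
          exact hc
        calc osc k j ≤ σ * osc (k - M) j := hstep
          _ ≤ σ * σ ^ ((k - M) / M) := mul_le_mul_of_nonneg_left hrec hσ0.le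
          _ = σ ^ (k / M) := by rw [hdiv, pow_succ]; ring
  have huRk : ∀ k, Matrix.vecMul u (R ^ k) = u := by
    intro k
    induction k with
    | zero => simp
    | succ k ih => rw [pow_succ, ← Matrix.vecMul_vecMul, ih, huR]
  have hnR : (0:ℝ) < n := by exact_mod_cast hn
  have hmem : ∀ k j, univ.inf' hne (fun i => (R ^ k) i j) ≤ u j / n ∧
      u j / n ≤ univ.sup' hne (fun i => (R ^ k) i j) := by
    intro k j
    have hj : u j = ∑ i, u i * (R ^ k) i j := by
      conv_lhs => rw [← huRk k]
      simp [Matrix.vecMul, dotProduct]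
    constructor
    · have h : ∑ i, u i * univ.inf' hne (fun i => (R ^ k) i j) ≤ ∑ i, u i * (R ^ k) i j :=
        Finset.sum_le_sum (fun i _ =>
          mul_le_mul_of_nonneg_left (Finset.inf'_le _ (mem_univ i)) (hu i))
      rw [← Finset.sum_mul, husum] at h
      rw [le_div_iff₀ hnR]
      rw [hj]
      linarith
    · have h : ∑ i, u i * (R ^ k) i j ≤ ∑ i, u i * univ.sup' hne (fun i => (R ^ k) i j) :=
        Finset.sum_le_sum (fun i _ =>
          mul_le_mul_of_nonneg_left (Finset.le_sup' (fun i => (R ^ k) i j) (mem_univ i)) (hu i))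
      rw [← Finset.sum_mul, husum] at h
      rw [div_le_iff₀ hnR]
      rw [hj]
      linarith
  set ρ : ℝ := σ ^ ((M:ℝ)⁻¹) with hρdef
  have hρ0 : 0 ≤ ρ := Real.rpow_nonneg hσ0.le _
  have hρ1 : ρ < 1 := Real.rpow_lt_one hσ0.le hσ1 (by positivity)
  refine ⟨σ⁻¹, ρ, by positivity, hρ0, hρ1, ?_⟩
  intro k i j
  have hosc := osc_bound k j
  obtain ⟨hml, hmu⟩ := hmem k j
  have h2u : (R ^ k) i j ≤ univ.sup' hne (fun i => (R ^ k) i j) :=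
    Finset.le_sup' (fun i => (R ^ k) i j) (mem_univ i)
  have h2l : univ.inf' hne (fun i => (R ^ k) i j) ≤ (R ^ k) i j :=
    Finset.inf'_le _ (mem_univ i)
  have hoscval : osc k j = univ.sup' hne (fun i => (R ^ k) i j) -
      univ.inf' hne (fun i => (R ^ k) i j) := rfl
  have habs : |(R ^ k) i j - u j / n| ≤ osc k j := by
    rw [abs_sub_le_iff]
    constructor <;> [skip; skip] <;> rw [hoscval] <;> linarith
  have key : σ ^ (k / M) ≤ σ⁻¹ * ρ ^ k := by
    have hρk : ρ ^ k = σ ^ ((M:ℝ)⁻¹ * k) := by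
      rw [hρdef, ← Real.rpow_natCast (σ ^ ((M:ℝ)⁻¹)) k, ← Real.rpow_mul hσ0.le]
    have hMR : (0:ℝ) < M := by exact_mod_cast hM0
    have hexp : (M:ℝ)⁻¹ * k - 1 ≤ ((k / M : ℕ) : ℝ) := by
      have hMk : k < M * (k / M) + M := by
        have h1 := Nat.div_add_mod k M
        have h2 := Nat.mod_lt k hM0
        omega
      have h3 : (k:ℝ) < M * ((k / M : ℕ):ℝ) + M := by exact_mod_cast hMk
      rw [sub_le_iff_le_add]
      rw [inv_mul_le_iff₀ hMR]
      nlinarith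
    calc σ ^ (k / M) = σ ^ (((k / M : ℕ)):ℝ) := (Real.rpow_natCast σ _).symm
      _ ≤ σ ^ ((M:ℝ)⁻¹ * k - 1) := Real.rpow_le_rpow_of_exponent_ge hσ0 hσ1.le hexp
      _ = σ⁻¹ * ρ ^ k := by
          rw [Real.rpow_sub hσ0, Real.rpow_one, hρk]; ring
  calc |(R ^ k) i j - u j / n| ≤ osc k j := habs
    _ ≤ σ ^ (k / M) := hosc
    _ ≤ σ⁻¹ * ρ ^ k := key

end Aux

/-- `R^k → 𝟙uᵀ/n` and `C^k → v𝟙ᵀ/n` entrywise at a geometric rate. -/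
theorem powers_converge_linearly {n : ℕ}
    (R C : Matrix (Fin n) (Fin n) ℝ) (u v : Fin n → ℝ)
    (hRnonneg : ∀ i j, 0 ≤ R i j) (hRrow : ∀ i, ∑ j, R i j = 1)
    (hRdiag : ∀ i, 0 < R i i) (hRtree : (rootSet R).Nonempty)
    (hu : ∀ i, 0 ≤ u i) (huR : Matrix.vecMul u R = u) (husum : ∑ i, u i = n)
    (hCnonneg : ∀ i j, 0 ≤ C i j) (hCcol : ∀ j, ∑ i, C i j = 1)
    (hCdiag : ∀ i, 0 < C i i) (hCtree : (rootSet Cᵀ).Nonempty)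
    (hv : ∀ i, 0 ≤ v i) (hCv : C.mulVec v = v) (hvsum : ∑ i, v i = n) :
    ∃ K ρ : ℝ, 0 ≤ K ∧ 0 ≤ ρ ∧ ρ < 1 ∧
      ∀ (k : ℕ) (i j : Fin n),
        |(R ^ k) i j - u j / n| ≤ K * ρ ^ k ∧
        |(C ^ k) i j - v i / n| ≤ K * ρ ^ k := by
  rcases Nat.eq_zero_or_pos n with hn | hn
  · subst hn
    exact ⟨0, 0, le_refl 0, le_refl 0, by norm_num, fun k i j => i.elim0⟩
  obtain ⟨K₁, ρ₁, hK₁, hρ₁0, hρ₁1, hb₁⟩ :=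
    main_row hn R u hRnonneg hRrow hRdiag hRtree hu huR husum
  have hCT : ∀ i j, 0 ≤ Cᵀ i j := fun i j => hCnonneg j i
  have hCTrow : ∀ i, ∑ j, Cᵀ i j = 1 := fun i => hCcol i
  have hCTdiag : ∀ i, 0 < Cᵀ i i := fun i => hCdiag i
  have hvCT : Matrix.vecMul v Cᵀ = v := by
    ext j
    have := congrFun hCv j
    simp only [Matrix.mulVec, dotProduct] at this
    simp only [Matrix.vecMul, dotProduct, Matrix.transpose_apply]
    rw [← this]
    exact Finset.sum_congr rfl (fun i _ => mul_comm _ _)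
  obtain ⟨K₂, ρ₂, hK₂, hρ₂0, hρ₂1, hb₂⟩ :=
    main_row hn Cᵀ v hCT hCTrow hCTdiag hCtree hv hvCT hvsum
  refine ⟨max K₁ K₂, max ρ₁ ρ₂, le_trans hK₁ (le_max_left _ _),
    le_trans hρ₁0 (le_max_left _ _), max_lt hρ₁1 hρ₂1, fun k i j => ?_⟩
  have hρmax0 : 0 ≤ max ρ₁ ρ₂ := le_trans hρ₁0 (le_max_left _ _)
  constructor
  · calc |(R ^ k) i j - u j / n| ≤ K₁ * ρ₁ ^ k := hb₁ k i j
      _ ≤ max K₁ K₂ * max ρ₁ ρ₂ ^ k :=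
        mul_le_mul (le_max_left _ _) (pow_le_pow_left₀ hρ₁0 (le_max_left _ _) k)
          (pow_nonneg hρ₁0 k) (le_trans hK₁ (le_max_left _ _))
  · have h := hb₂ k j i
    have hT : ((Cᵀ) ^ k) j i = (C ^ k) i j := by
      rw [← Matrix.transpose_pow]
      rfl
    rw [hT] at h
    calc |(C ^ k) i j - v i / n| ≤ K₂ * ρ₂ ^ k := h
      _ ≤ max K₁ K₂ * max ρ₁ ρ₂ ^ k :=
        mul_le_mul (le_max_right _ _) (pow_le_pow_left₀ hρ₂0 (le_max_right _ _) k)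
          (pow_nonneg hρ₂0 k) (le_trans hK₁ (le_max_left _ _))
end

section
/- Let each f_i : ℝᵖ → ℝ be μ-strongly convex with L-Lipschitz continuous gradient and let x* be the unique minimizer of f = ∑_{i=1}^n f_i. Let R ∈ ℝ^{n×n} be row-stochastic with positive diagonal entries, C ∈ ℝ^{n×n} column-stochastic with positive diagonal entries, assume 𝒢_R and 𝒢_{Cᵀ} each contain a spanning tree with ℛ_R ∩ ℛ_{Cᵀ} ≠ ∅, and let 𝛂 = diag(α_1,…,α_n) with all α_i ≥ 0 and α_i > 0 for at least one i ∈ ℛ_R ∩ ℛ_{Cᵀ}. If x, y ∈ ℝ^{n×p} satisfy x = R(x − 𝛂y), y = Cy, and 𝟙ᵀy = 𝟙ᵀ∇F(x), then y = 0 and every row of x equals x*ᵀ (i.e., x = 𝟙x*ᵀ). -/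
open Matrix

/-- For `x ∈ ℝ^{n×p}` with rows `x_i`, `gradF G x ∈ ℝ^{n×p}` is the matrix whose `i`-th row
is the gradient `G i (x i) = ∇f_i(x_i)`. -/
noncomputable def gradF {n p : ℕ} (G : Fin n → EuclideanSpace ℝ (Fin p) → EuclideanSpace ℝ (Fin p))
    (x : Matrix (Fin n) (Fin p) ℝ) : Matrix (Fin n) (Fin p) ℝ :=
  Matrix.of fun i c => G i (WithLp.toLp 2 (x i)) c

lemma reach_mem {n : ℕ} (M : Matrix (Fin n) (Fin n) ℝ) (S : Set (Fin n))
    (hS : ∀ a b, 0 < M b a → b ∈ S → a ∈ S) {r : Fin n} (hr : r ∈ rootSet M)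
    {i : Fin n} (hi : i ∈ S) : r ∈ S := by
  have key : ∀ {j}, Relation.ReflTransGen (fun a b => 0 < M b a) r j → j ∈ S → r ∈ S := by
    intro j h
    induction h with
    | refl => exact id
    | @tail b c hrb hbc ih => exact fun hc => ih (hS b c hbc hc)
  exact key (hr i) hi

lemma rowstoch_fixed_le {n : ℕ} (M : Matrix (Fin n) (Fin n) ℝ)
    (hnn : ∀ i j, 0 ≤ M i j) (hrow : ∀ i, ∑ j, M i j = 1)
    {r : Fin n} (hr : r ∈ rootSet M) (w : Fin n → ℝ) (hw : M.mulVec w = w)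
    (i : Fin n) : w i ≤ w r := by
  obtain ⟨i₀, -, hmax⟩ := Finset.exists_max_image Finset.univ w ⟨r, Finset.mem_univ r⟩
  have hS : ∀ a b, 0 < M b a → w b = w i₀ → w a = w i₀ := by
    intro a b hba hb
    have hsum : ∑ j, M b j * (w i₀ - w j) = 0 := by
      have : ∑ j, M b j * (w i₀ - w j) = (∑ j, M b j) * w i₀ - M.mulVec w b := by
        simp [Matrix.mulVec, dotProduct, mul_sub, Finset.sum_sub_distrib,
          Finset.sum_mul]
      rw [this, hrow b, hw, one_mul, hb, sub_self]
    have hnn' : ∀ j ∈ Finset.univ, 0 ≤ M b j * (w i₀ - w j) := fun j _ =>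
      mul_nonneg (hnn b j) (sub_nonneg.mpr (hmax j (Finset.mem_univ j)))
    have := (Finset.sum_eq_zero_iff_of_nonneg hnn').mp hsum a (Finset.mem_univ a)
    have := (mul_eq_zero.mp this).resolve_left (ne_of_gt hba)
    linarith [sub_eq_zero.mp this]
  have hrS : w r = w i₀ := reach_mem M {j | w j = w i₀} hS hr rfl
  rw [hrS]; exact hmax i (Finset.mem_univ i)

lemma rowstoch_fixed_const {n : ℕ} (M : Matrix (Fin n) (Fin n) ℝ)
    (hnn : ∀ i j, 0 ≤ M i j) (hrow : ∀ i, ∑ j, M i j = 1)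
    {r : Fin n} (hr : r ∈ rootSet M) (w : Fin n → ℝ) (hw : M.mulVec w = w)
    (i : Fin n) : w i = w r := by
  have h1 := rowstoch_fixed_le M hnn hrow hr w hw i
  have h2 := rowstoch_fixed_le M hnn hrow hr (-w) (by rw [Matrix.mulVec_neg, hw]) i
  simp only [Pi.neg_apply, neg_le_neg_iff] at h2
  linarith

lemma colstoch_fixed_abs {n : ℕ} (C : Matrix (Fin n) (Fin n) ℝ)
    (hnn : ∀ i j, 0 ≤ C i j) (hcol : ∀ j, ∑ i, C i j = 1)
    (w : Fin n → ℝ) (hw : C.mulVec w = w) :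
    C.mulVec (fun i => |w i|) = fun i => |w i| := by
  have hge : ∀ i, 0 ≤ C.mulVec (fun i => |w i|) i - |w i| := by
    intro i
    have h1 : |w i| ≤ ∑ j, C i j * |w j| := by
      have hwi : ∑ j, C i j * w j = w i := by
        simpa [Matrix.mulVec, dotProduct] using congrFun hw i
      calc |w i| = |∑ j, C i j * w j| := by rw [hwi]
        _ ≤ ∑ j, |C i j * w j| := Finset.abs_sum_le_sum_abs _ _
        _ = ∑ j, C i j * |w j| := by
            refine Finset.sum_congr rfl fun j _ => ?_
            rw [abs_mul, abs_of_nonneg (hnn i j)]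
    simpa [Matrix.mulVec, dotProduct] using sub_nonneg.mpr h1
  have hsum : ∑ i, (C.mulVec (fun i => |w i|) i - |w i|) = 0 := by
    simp only [Matrix.mulVec, dotProduct, Finset.sum_sub_distrib]
    rw [Finset.sum_comm]
    simp only [← Finset.sum_mul]
    simp [hcol, sub_eq_zero]
  have := (Finset.sum_eq_zero_iff_of_nonneg (fun i _ => hge i)).mp hsum
  funext i
  have := this i (Finset.mem_univ i)
  linarith [this]

lemma finrank_ker_transpose {n : ℕ} (A : Matrix (Fin n) (Fin n) ℝ) :
    Module.finrank ℝ (LinearMap.ker A.mulVecLin) =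
      Module.finrank ℝ (LinearMap.ker Aᵀ.mulVecLin) := by
  have h1 := LinearMap.finrank_range_add_finrank_ker A.mulVecLin
  have h2 := LinearMap.finrank_range_add_finrank_ker Aᵀ.mulVecLin
  have h3 : Aᵀ.rank = A.rank := Matrix.rank_transpose A
  unfold Matrix.rank at h3
  omega

lemma colstoch_perron (C : Matrix (Fin n) (Fin n) ℝ)
    (hnn : ∀ i j, 0 ≤ C i j) (hcol : ∀ j, ∑ i, C i j = 1)
    {r : Fin n} (hr : r ∈ rootSet Cᵀ) :
    ∃ v : Fin n → ℝ, C.mulVec v = v ∧ (∀ i, 0 ≤ v i) ∧ 0 < v r ∧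
      ∀ w : Fin n → ℝ, C.mulVec w = w → ∃ t : ℝ, w = t • v := by
  set A : Matrix (Fin n) (Fin n) ℝ := C - 1 with hA
  have hmem : ∀ w : Fin n → ℝ, w ∈ LinearMap.ker A.mulVecLin ↔ C.mulVec w = w := by
    intro w
    rw [LinearMap.mem_ker, Matrix.mulVecLin_apply, hA, Matrix.sub_mulVec, Matrix.one_mulVec,
      sub_eq_zero]
  have hmemT : ∀ w : Fin n → ℝ, w ∈ LinearMap.ker Aᵀ.mulVecLin ↔ Cᵀ.mulVec w = w := by
    intro w
    rw [LinearMap.mem_ker, Matrix.mulVecLin_apply, hA, Matrix.transpose_sub,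
      Matrix.transpose_one, Matrix.sub_mulVec, Matrix.one_mulVec, sub_eq_zero]
  -- Cᵀ is row-stochastic
  have hTnn : ∀ i j, 0 ≤ Cᵀ i j := fun i j => hnn j i
  have hTrow : ∀ i, ∑ j, Cᵀ i j = 1 := fun i => hcol i
  -- ker Aᵀ = span {1}
  have hone : Cᵀ.mulVec (fun _ => (1:ℝ)) = fun _ => 1 := by
    funext i
    simp only [Matrix.mulVec, dotProduct, mul_one, Matrix.transpose_apply]
    exact hcol i
  have hkerT : LinearMap.ker Aᵀ.mulVecLin = Submodule.span ℝ {fun _ => (1:ℝ)} := by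
    apply le_antisymm
    · intro w hw
      rw [hmemT] at hw
      rw [Submodule.mem_span_singleton]
      refine ⟨w r, ?_⟩
      funext i
      simpa using (rowstoch_fixed_const Cᵀ hTnn hTrow hr w hw i).symm
    · rw [Submodule.span_le, Set.singleton_subset_iff]
      exact (hmemT _).mpr hone
  have honene : (fun _ => (1:ℝ)) ≠ (0 : Fin n → ℝ) := by
    intro h
    have := congrFun h r
    simp at this
  have hrkT : Module.finrank ℝ (LinearMap.ker Aᵀ.mulVecLin) = 1 := by
    rw [hkerT]; exact finrank_span_singleton honene
  have hrk : Module.finrank ℝ (LinearMap.ker A.mulVecLin) = 1 :=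
    (finrank_ker_transpose A).trans hrkT
  -- get a nonzero fixed vector of C
  have hkne : LinearMap.ker A.mulVecLin ≠ ⊥ := by
    intro h
    rw [h] at hrk
    simp at hrk
  obtain ⟨w₀, hw₀mem, hw₀ne'⟩ := Submodule.exists_mem_ne_zero_of_ne_bot hkne
  have hw₀fix : C.mulVec w₀ = w₀ := (hmem w₀).mp hw₀mem
  set v : Fin n → ℝ := fun i => |w₀ i| with hv
  have hvfix : C.mulVec v = v := colstoch_fixed_abs C hnn hcol w₀ hw₀fix
  have hvnn : ∀ i, 0 ≤ v i := fun i => abs_nonneg _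
  have hvne : ∃ i, 0 < v i := by
    by_contra h
    push_neg at h
    apply hw₀ne'
    funext i
    have h2 := le_antisymm (h i) (hvnn i)
    exact abs_eq_zero.mp h2
  obtain ⟨i₀, hi₀⟩ := hvne
  have hvr : 0 < v r := by
    refine reach_mem Cᵀ {i | 0 < v i} ?_ hr hi₀
    intro a b hba hb
    have : C a b * v b ≤ ∑ j, C a j * v j :=
      Finset.single_le_sum (fun j _ => mul_nonneg (hnn a j) (hvnn j)) (Finset.mem_univ b)
    have hva : ∑ j, C a j * v j = v a := by
      simpa [Matrix.mulVec, dotProduct] using congrFun hvfix a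
    have hpos : 0 < C a b * v b := mul_pos (by simpa using hba) hb
    exact lt_of_lt_of_le hpos (hva ▸ this)
  refine ⟨v, hvfix, hvnn, hvr, ?_⟩
  intro w hw
  have hspan : Submodule.span ℝ {v} = LinearMap.ker A.mulVecLin := by
    apply Submodule.eq_of_le_of_finrank_le
    · rw [Submodule.span_le, Set.singleton_subset_iff]
      exact (hmem v).mpr hvfix
    · rw [hrk, finrank_span_singleton (by intro h; exact absurd (congrFun h r) (by simp; linarith))]
  have : w ∈ Submodule.span ℝ {v} := hspan ▸ (hmem w).mpr hw
  obtain ⟨t, ht⟩ := Submodule.mem_span_singleton.mp this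
  exact ⟨t, ht.symm⟩

/-- Any fixed point of the Push-Pull iteration satisfying the gradient
tracking identity is optimal: `y = 0` and every row of `x` equals `x*`. -/
theorem push_pull_fixed_point_optimal {n p : ℕ}
    (f : Fin n → EuclideanSpace ℝ (Fin p) → ℝ)
    (G : Fin n → EuclideanSpace ℝ (Fin p) → EuclideanSpace ℝ (Fin p))
    (hgrad : ∀ i z, HasGradientAt (f i) (G i z) z)
    (μ L : ℝ) (hμ : 0 < μ) (hμL : μ ≤ L)
    (hsc : ∀ i (a b : EuclideanSpace ℝ (Fin p)),
      μ * ‖a - b‖ ^ 2 ≤ (inner ℝ (G i a - G i b) (a - b) : ℝ))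
    (hlip : ∀ i (a b : EuclideanSpace ℝ (Fin p)), ‖G i a - G i b‖ ≤ L * ‖a - b‖)
    (xstar : EuclideanSpace ℝ (Fin p))
    (hmin : ∀ z, ∑ i, f i xstar ≤ ∑ i, f i z)
    (R C : Matrix (Fin n) (Fin n) ℝ)
    (hRnonneg : ∀ i j, 0 ≤ R i j) (hRrow : ∀ i, ∑ j, R i j = 1) (hRdiag : ∀ i, 0 < R i i)
    (hCnonneg : ∀ i j, 0 ≤ C i j) (hCcol : ∀ j, ∑ i, C i j = 1) (hCdiag : ∀ i, 0 < C i i)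
    (hRtree : (rootSet R).Nonempty) (hCtree : (rootSet Cᵀ).Nonempty)
    (hcommon : (rootSet R ∩ rootSet Cᵀ).Nonempty)
    (α : Fin n → ℝ) (hα : ∀ i, 0 ≤ α i)
    (hαpos : ∃ i ∈ rootSet R ∩ rootSet Cᵀ, 0 < α i)
    (x y : Matrix (Fin n) (Fin p) ℝ)
    (hx : x = R * (x - Matrix.diagonal α * y))
    (hy : y = C * y)
    (htrack : ∀ c, ∑ i, y i c = ∑ i, gradF G x i c) :
    y = 0 ∧ ∀ i c, x i c = xstar c := by
  obtain ⟨i₁, ⟨hiR, hiC⟩, hα1⟩ := hαpos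
  -- Perron vectors
  obtain ⟨v, hvfix, hvnn, hvr, hvspan⟩ := colstoch_perron C hCnonneg hCcol hiC
  have hRTcol : ∀ j, ∑ i, Rᵀ i j = 1 := by intro j; simpa using hRrow j
  have hRTroot : i₁ ∈ rootSet Rᵀᵀ := by rwa [Matrix.transpose_transpose]
  obtain ⟨u, hufix, hunn, hur, -⟩ :=
    colstoch_perron Rᵀ (fun i j => hRnonneg j i) hRTcol hRTroot
  -- u is a left fixed vector of R
  have huR : ∀ j, ∑ i, u i * R i j = u j := by
    intro j
    have := congrFun hufix j
    simpa [Matrix.mulVec, dotProduct, mul_comm] using this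
  -- columns of y are fixed by C
  have hycol : ∀ c, C.mulVec (fun i => y i c) = fun i => y i c := by
    intro c
    funext i
    have : y i c = (C * y) i c := by rw [← hy]
    simpa [Matrix.mulVec, dotProduct, Matrix.mul_apply] using this.symm
  -- y i c = t c * v i
  have hyt : ∀ c, ∃ t : ℝ, ∀ i, y i c = t * v i := by
    intro c
    obtain ⟨t, ht⟩ := hvspan _ (hycol c)
    exact ⟨t, fun i => by simpa using congrFun ht i⟩
  -- u-weighted identity: ∑ j, u j * (α j * y j c) = 0
  have hkey : ∀ c, ∑ j, u j * (α j * y j c) = 0 := by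
    intro c
    have hxe : ∀ i, x i c = ∑ j, R i j * (x j c - α j * y j c) := by
      intro i
      conv_lhs => rw [hx]
      rw [Matrix.mul_apply]
      refine Finset.sum_congr rfl fun j _ => ?_
      rw [Matrix.sub_apply, Matrix.diagonal_mul]
    have hs : ∑ i, u i * x i c = ∑ j, u j * (x j c - α j * y j c) := by
      calc ∑ i, u i * x i c = ∑ i, u i * ∑ j, R i j * (x j c - α j * y j c) := by
            refine Finset.sum_congr rfl fun i _ => by rw [← hxe i]
        _ = ∑ j, (∑ i, u i * R i j) * (x j c - α j * y j c) := by
            simp only [Finset.mul_sum, Finset.sum_mul]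
            rw [Finset.sum_comm]
            exact Finset.sum_congr rfl fun j _ =>
              Finset.sum_congr rfl fun i _ => (mul_assoc _ _ _).symm
        _ = ∑ j, u j * (x j c - α j * y j c) := by
            refine Finset.sum_congr rfl fun j _ => by rw [huR j]
    have := hs
    simp only [mul_sub, Finset.sum_sub_distrib] at this
    linarith
  -- conclude y = 0
  have hτ : 0 < ∑ j, u j * (α j * v j) := by
    have hterm : ∀ j ∈ Finset.univ, 0 ≤ u j * (α j * v j) := fun j _ =>
      mul_nonneg (hunn j) (mul_nonneg (hα j) (hvnn j))
    have h1 : u i₁ * (α i₁ * v i₁) ≤ ∑ j, u j * (α j * v j) :=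
      Finset.single_le_sum hterm (Finset.mem_univ i₁)
    have h2 : 0 < u i₁ * (α i₁ * v i₁) := mul_pos hur (mul_pos hα1 hvr)
    linarith
  have hy0 : ∀ i c, y i c = 0 := by
    intro i c
    obtain ⟨t, ht⟩ := hyt c
    have h0 : t * ∑ j, u j * (α j * v j) = 0 := by
      have := hkey c
      rw [Finset.mul_sum]
      rw [← this]
      refine Finset.sum_congr rfl fun j _ => by rw [ht j]; ring
    have ht0 : t = 0 := by
      rcases mul_eq_zero.mp h0 with h | h
      · exact h
      · exact absurd h (ne_of_gt hτ)
    rw [ht i, ht0, zero_mul]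
  have hyzero : y = 0 := by ext i c; exact hy0 i c
  -- x = R x
  have hxfix : x = R * x := by
    have h' : x - Matrix.diagonal α * y = x := by rw [hyzero]; simp
    calc x = R * (x - Matrix.diagonal α * y) := hx
      _ = R * x := by rw [h']
  have hxcol : ∀ c, R.mulVec (fun i => x i c) = fun i => x i c := by
    intro c
    funext i
    have : x i c = (R * x) i c := by rw [← hxfix]
    simpa [Matrix.mulVec, dotProduct, Matrix.mul_apply] using this.symm
  have hxconst : ∀ i c, x i c = x i₁ c := fun i c =>
    rowstoch_fixed_const R hRnonneg hRrow hiR _ (hxcol c) i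
  -- rows of x all equal xt
  set xt : EuclideanSpace ℝ (Fin p) := WithLp.toLp 2 (x i₁) with hxt
  have hxrow : ∀ i, (WithLp.toLp 2 (x i) : EuclideanSpace ℝ (Fin p)) = xt := by
    intro i
    ext c
    exact hxconst i c
  -- sum of gradients at xt is zero
  have hGsum : ∑ i, G i xt = 0 := by
    ext c
    have h1 := htrack c
    simp only [hy0, Finset.sum_const_zero] at h1
    have h2 : ∀ i, gradF G x i c = G i xt c := by
      intro i
      simp only [gradF, Matrix.of_apply]
      rw [show (WithLp.toLp 2 (x i) : EuclideanSpace ℝ (Fin p)) = xt from hxrow i]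
    rw [Finset.sum_congr rfl (fun i _ => h2 i)] at h1
    rw [WithLp.ofLp_sum, Finset.sum_apply c Finset.univ (fun i => (G i xt).ofLp)]
    simpa using h1.symm
  -- gradient of total f at xstar is zero
  have hGstar : ∑ i, G i xstar = 0 := by
    have hF : HasFDerivAt (fun z => ∑ i, f i z)
        (∑ i, (InnerProductSpace.toDual ℝ (EuclideanSpace ℝ (Fin p))) (G i xstar)) xstar := by
      exact HasFDerivAt.fun_sum fun i _ =>
        (hasGradientAt_iff_hasFDerivAt.mp (hgrad i xstar))
    have hloc : IsLocalMin (fun z => ∑ i, f i z) xstar :=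
      Filter.Eventually.of_forall fun z => hmin z
    have h0 := hloc.hasFDerivAt_eq_zero hF
    have : (InnerProductSpace.toDual ℝ (EuclideanSpace ℝ (Fin p))) (∑ i, G i xstar) = 0 := by
      rw [map_sum]
      exact h0
    exact (InnerProductSpace.toDual ℝ _).map_eq_zero_iff.mp this
  -- strong convexity forces xt = xstar
  have hfin : xt = xstar := by
    have hsum : ∑ i : Fin n, μ * ‖xt - xstar‖ ^ 2 ≤
        ∑ i : Fin n, (inner ℝ (G i xt - G i xstar) (xt - xstar) : ℝ) :=
      Finset.sum_le_sum fun i _ => hsc i xt xstar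
    have hrhs : ∑ i : Fin n, (inner ℝ (G i xt - G i xstar) (xt - xstar) : ℝ) = 0 := by
      rw [← sum_inner]
      have : ∑ i : Fin n, (G i xt - G i xstar) = 0 := by
        rw [Finset.sum_sub_distrib, hGsum, hGstar, sub_zero]
      rw [this, inner_zero_left]
    rw [hrhs] at hsum
    simp only [Finset.sum_const, Finset.card_univ, Fintype.card_fin, nsmul_eq_mul] at hsum
    have hn : 0 < (n : ℝ) := by
      have : (0:ℕ) < n := i₁.pos
      exact_mod_cast this
    have h2 : μ * ‖xt - xstar‖ ^ 2 ≤ 0 := by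
      nlinarith
    have h3 : ‖xt - xstar‖ ^ 2 ≤ 0 := by nlinarith
    have h4 : ‖xt - xstar‖ = 0 := by
      have := sq_nonneg ‖xt - xstar‖
      have : ‖xt - xstar‖ ^ 2 = 0 := le_antisymm h3 (by positivity)
      exact pow_eq_zero_iff (by norm_num) |>.mp this
    have := norm_sub_eq_zero_iff.mp h4
    exact this
  exact ⟨hyzero, fun i c => by rw [hxconst i c]; exact congrArg (fun v => v c) hfin⟩
end

section
/- Let R ∈ ℝ^{n×n} be row-stochastic with positive diagonal entries whose induced digraph 𝒢_R contains a spanning tree, and let u ∈ ℝⁿ be nonnegative with uᵀR = uᵀ and uᵀ𝟙 = n. Let C ∈ ℝ^{n×n} be column-stochastic with positive diagonal entries such that 𝒢_{Cᵀ} contains a spanning tree, and let v ∈ ℝⁿ be nonnegative with Cv = v and 𝟙ᵀv = n. Then every complex eigenvalue of the matrix R − (1/n)𝟙uᵀ has modulus strictly less than 1, and every complex eigenvalue of C − (1/n)v𝟙ᵀ has modulus strictly less than 1. -/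
open Matrix

open Polynomial in
lemma my_charpoly_transpose {m : Type*} [Fintype m] [DecidableEq m] {K : Type*} [CommRing K]
    (M : Matrix m m K) : Matrix.charpoly Mᵀ = Matrix.charpoly M := by
  have h : charmatrix Mᵀ = (charmatrix M)ᵀ := by
    ext i j
    by_cases hij : i = j
    · subst hij; simp
    · simp [charmatrix_apply_ne _ _ _ hij, charmatrix_apply_ne _ _ _ (Ne.symm hij)]
  rw [Matrix.charpoly, h, Matrix.det_transpose, Matrix.charpoly]

open Polynomial in
lemma my_exists_eigenvector {m : Type*} [Fintype m] [DecidableEq m] (M : Matrix m m ℂ) (μ : ℂ)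
    (h : M.charpoly.IsRoot μ) : ∃ x, x ≠ 0 ∧ M.mulVec x = μ • x := by
  have hmap : (charmatrix M).map (evalRingHom μ) = μ • (1 : Matrix m m ℂ) - M := by
    ext i j
    by_cases hij : i = j
    · subst hij; simp
    · simp [charmatrix_apply_ne _ _ _ hij, Matrix.one_apply_ne hij]
  have hdet : (μ • (1 : Matrix m m ℂ) - M).det = 0 := by
    have h2 := h
    rw [Polynomial.IsRoot, Matrix.charpoly, ← coe_evalRingHom, RingHom.map_det,
      RingHom.mapMatrix_apply, hmap] at h2
    exact h2
  obtain ⟨x, hx0, hx⟩ := Matrix.exists_mulVec_eq_zero_iff.2 hdet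
  refine ⟨x, hx0, ?_⟩
  rw [Matrix.sub_mulVec, Matrix.smul_mulVec, Matrix.one_mulVec, sub_eq_zero] at hx
  exact hx.symm

/-- For a row-stochastic `R` with root `r` and fixed vector `y`, the value at `r` is maximal. -/
lemma fixed_le_root {n : ℕ} (R : Matrix (Fin n) (Fin n) ℝ)
    (hRnonneg : ∀ i j, 0 ≤ R i j) (hRrow : ∀ i, ∑ j, R i j = 1)
    {r : Fin n} (hr : r ∈ rootSet R) (y : Fin n → ℝ)
    (hy : ∀ i, ∑ j, R i j * y j = y i) : ∀ i, y i ≤ y r := by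
  have hne : (Finset.univ : Finset (Fin n)).Nonempty := ⟨r, Finset.mem_univ r⟩
  obtain ⟨i0, -, hi0⟩ := Finset.exists_max_image Finset.univ y hne
  have key : ∀ a, Relation.ReflTransGen (fun a b => 0 < R b a) a i0 → y a = y i0 := by
    intro a hpath
    induction hpath using Relation.ReflTransGen.head_induction_on with
    | refl => rfl
    | head hab _ ih =>
      rename_i b c _
      -- hab : 0 < R c b ; ih : y c = y i0 ; goal : y b = y i0
      have hsum : ∑ j, R c j * (y i0 - y j) = 0 := by
        have h1 : ∑ j, R c j * (y i0 - y j) = (∑ j, R c j) * y i0 - ∑ j, R c j * y j := by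
          rw [Finset.sum_mul]
          rw [← Finset.sum_sub_distrib]
          exact Finset.sum_congr rfl fun j _ => by ring
        rw [h1, hRrow c, hy c, one_mul, ih, sub_self]
      have hterm : ∀ j ∈ Finset.univ, R c j * (y i0 - y j) = 0 :=
        (Finset.sum_eq_zero_iff_of_nonneg (fun j _ =>
          mul_nonneg (hRnonneg c j) (by linarith [hi0 j (Finset.mem_univ j)]))).1 hsum
      have := hterm b (Finset.mem_univ b)
      have hb : y i0 - y b = 0 := by
        rcases mul_eq_zero.1 this with h | h
        · exact absurd h (ne_of_gt hab)
        · exact h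
      linarith
  have hyr : y r = y i0 := key r (hr i0)
  intro i
  rw [hyr]
  exact hi0 i (Finset.mem_univ i)

lemma fixed_const {n : ℕ} (R : Matrix (Fin n) (Fin n) ℝ)
    (hRnonneg : ∀ i j, 0 ≤ R i j) (hRrow : ∀ i, ∑ j, R i j = 1)
    {r : Fin n} (hr : r ∈ rootSet R) (y : Fin n → ℝ)
    (hy : ∀ i, ∑ j, R i j * y j = y i) : ∀ i, y i = y r := by
  intro i
  have h1 := fixed_le_root R hRnonneg hRrow hr y hy i
  have h2 := fixed_le_root R hRnonneg hRrow hr (fun j => -y j)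
    (fun k => by simp only [mul_neg, Finset.sum_neg_distrib, hy k]) i
  simp only [neg_le_neg_iff] at h2
  linarith

/-- The main lemma for the row-stochastic case. -/
lemma main_lemma {n : ℕ} (R : Matrix (Fin n) (Fin n) ℝ) (u : Fin n → ℝ)
    (hRnonneg : ∀ i j, 0 ≤ R i j) (hRrow : ∀ i, ∑ j, R i j = 1)
    (hRdiag : ∀ i, 0 < R i i) (hRtree : (rootSet R).Nonempty)
    (hu : ∀ i, 0 ≤ u i) (huR : Matrix.vecMul u R = u) (husum : ∑ i, u i = n) :
    ∀ lam : ℂ,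
      (((R - Matrix.of fun _ j => u j / n).map (fun t : ℝ => (t : ℂ))).charpoly).IsRoot lam →
        ‖lam‖ < 1 := by
  intro lam hroot
  by_contra hcon
  push_neg at hcon
  obtain ⟨r, hr⟩ := hRtree
  have hn : 0 < n := Fin.pos r
  have hnC : ((n : ℝ) : ℂ) ≠ 0 := by
    simp only [ne_eq, Complex.ofReal_eq_zero, Nat.cast_eq_zero]
    omega
  obtain ⟨x, hx0, hx⟩ := my_exists_eigenvector _ lam hroot
  have heqC : ∀ i, ∑ j, (((R i j : ℝ) : ℂ) - ((u j : ℝ) : ℂ) / ((n : ℝ) : ℂ)) * x j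
      = lam * x i := by
    intro i
    have h1 := congrFun hx i
    simp only [Matrix.mulVec, dotProduct, Matrix.map_apply, Matrix.sub_apply,
      Matrix.of_apply, Pi.smul_apply, smul_eq_mul, Complex.ofReal_sub, Complex.ofReal_div] at h1
    exact h1
  have hlam0 : lam ≠ 0 := by
    intro h
    rw [h] at hcon
    simp at hcon
    linarith
  -- u^T x = 0
  have hvm : ∀ j, ∑ i, ((u i : ℝ) : ℂ) * ((R i j : ℝ) : ℂ) = ((u j : ℝ) : ℂ) := by
    intro j
    have h1 := congrFun huR j
    rw [Matrix.vecMul, dotProduct] at h1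
    have := congrArg (fun t : ℝ => (t : ℂ)) h1
    push_cast at this
    exact this
  have husumC : ∑ i, ((u i : ℝ) : ℂ) = ((n : ℝ) : ℂ) := by
    rw [← Complex.ofReal_sum, husum]
  have hux : ∑ j, ((u j : ℝ) : ℂ) * x j = 0 := by
    have h1 : lam * ∑ i, ((u i : ℝ) : ℂ) * x i = 0 := by
      have e1 : lam * ∑ i, ((u i : ℝ) : ℂ) * x i = ∑ i, ((u i : ℝ) : ℂ) * (lam * x i) := by
        rw [Finset.mul_sum]; exact Finset.sum_congr rfl fun i _ => by ring
      rw [e1]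
      have e2 : ∑ i, ((u i : ℝ) : ℂ) * (lam * x i)
          = ∑ j, (∑ i, ((u i : ℝ) : ℂ) * ((((R i j : ℝ) : ℂ) - ((u j : ℝ) : ℂ) / ((n : ℝ) : ℂ)) * x j)) := by
        rw [Finset.sum_comm]
        refine Finset.sum_congr rfl fun i _ => ?_
        rw [← heqC i, Finset.mul_sum]
      rw [e2]
      refine Finset.sum_eq_zero fun j _ => ?_
      have e3 : ∑ i, ((u i : ℝ) : ℂ) * ((((R i j : ℝ) : ℂ) - ((u j : ℝ) : ℂ) / ((n : ℝ) : ℂ)) * x j)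
          = (∑ i, ((u i : ℝ) : ℂ) * ((R i j : ℝ) : ℂ)) * x j
            - (∑ i, ((u i : ℝ) : ℂ)) * (((u j : ℝ) : ℂ) / ((n : ℝ) : ℂ) * x j) := by
        rw [Finset.sum_mul, Finset.sum_mul, ← Finset.sum_sub_distrib]
        exact Finset.sum_congr rfl fun i _ => by ring
      rw [e3, hvm j, husumC]
      have hn' : (n : ℂ) ≠ 0 := Nat.cast_ne_zero.mpr (by omega)
      field_simp
      ring
    rcases mul_eq_zero.1 h1 with h | h
    · exact absurd h hlam0
    · exact h
  -- R x = lam x entrywise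
  have heq2 : ∀ i, ∑ j, ((R i j : ℝ) : ℂ) * x j = lam * x i := by
    intro i
    have e1 : ∑ j, (((R i j : ℝ) : ℂ) - ((u j : ℝ) : ℂ) / ((n : ℝ) : ℂ)) * x j
        = ∑ j, ((R i j : ℝ) : ℂ) * x j - (∑ j, ((u j : ℝ) : ℂ) * x j) / ((n : ℝ) : ℂ) := by
      rw [Finset.sum_div, ← Finset.sum_sub_distrib]
      exact Finset.sum_congr rfl fun j _ => by ring
    have := heqC i
    rw [e1, hux] at this
    simpa using this
  -- argmax of |x|
  obtain ⟨i0, -, hi0⟩ := Finset.exists_max_image Finset.univ (fun i => ‖x i‖)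
    ⟨r, Finset.mem_univ r⟩
  set M : ℝ := ‖x i0‖ with hM
  have hMpos : 0 < M := by
    obtain ⟨k, hk⟩ := Function.ne_iff.1 hx0
    have : 0 < ‖x k‖ := by
      simpa using norm_pos_iff.mpr hk
    exact lt_of_lt_of_le this (hi0 k (Finset.mem_univ k))
  -- |lam| ≤ 1
  have habs_le : ∀ (s : Finset (Fin n)), ‖∑ j ∈ s, ((R i0 j : ℝ) : ℂ) * x j‖
      ≤ ∑ j ∈ s, R i0 j * M := by
    intro s
    refine le_trans (norm_sum_le _ _) ?_
    refine Finset.sum_le_sum fun j _ => ?_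
    rw [norm_mul, Complex.norm_real, Real.norm_eq_abs, abs_of_nonneg (hRnonneg i0 j)]
    exact mul_le_mul_of_nonneg_left (hi0 j (Finset.mem_univ j)) (hRnonneg i0 j)
  have hle1 : ‖lam‖ ≤ 1 := by
    have h1 : ‖lam‖ * M ≤ 1 * M := by
      have := habs_le Finset.univ
      rw [← Finset.sum_mul, hRrow i0, heq2 i0, norm_mul] at this
      simpa using this
    exact le_of_mul_le_mul_right h1 hMpos
  have habs1 : ‖lam‖ = 1 := le_antisymm hle1 hcon
  -- lam = 1 using the positive diagonal
  set d : ℝ := R i0 i0 with hd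
  have hd1 : d ≤ 1 := by
    have : ∑ j ∈ Finset.univ.erase i0, R i0 j ≥ 0 :=
      Finset.sum_nonneg fun j _ => hRnonneg i0 j
    have hsplit : d + ∑ j ∈ Finset.univ.erase i0, R i0 j = 1 := by
      rw [hd, Finset.add_sum_erase _ _ (Finset.mem_univ i0)]
      exact hRrow i0
    linarith
  have hkey : ‖lam - (d : ℂ)‖ ≤ 1 - d := by
    have hsplit : ((d : ℝ) : ℂ) * x i0 + ∑ j ∈ Finset.univ.erase i0, ((R i0 j : ℝ) : ℂ) * x j
        = lam * x i0 := by
      rw [hd]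
      exact (Finset.add_sum_erase Finset.univ (fun j => ((R i0 j : ℝ) : ℂ) * x j)
        (Finset.mem_univ i0)).trans (heq2 i0)
    have h2 : (lam - (d : ℂ)) * x i0 = ∑ j ∈ Finset.univ.erase i0, ((R i0 j : ℝ) : ℂ) * x j := by
      linear_combination -hsplit
    have h3 : ‖lam - (d : ℂ)‖ * M ≤ (1 - d) * M := by
      have h4 := habs_le (Finset.univ.erase i0)
      rw [← h2, norm_mul] at h4
      have h5 : ∑ j ∈ Finset.univ.erase i0, R i0 j * M = (1 - d) * M := by
        rw [← Finset.sum_mul]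
        congr 1
        have : d + ∑ j ∈ Finset.univ.erase i0, R i0 j = 1 := by
          rw [hd, Finset.add_sum_erase _ _ (Finset.mem_univ i0)]
          exact hRrow i0
        linarith
      rw [h5] at h4
      exact h4
    exact le_of_mul_le_mul_right h3 hMpos
  have hlam1 : lam = 1 := by
    have hnsq : Complex.normSq lam = 1 := by
      rw [← Complex.sq_norm, habs1, one_pow]
    have hre : (lam.re - d) ^ 2 + lam.im ^ 2 ≤ (1 - d) ^ 2 := by
      have h1 : Complex.normSq (lam - (d : ℂ)) ≤ (1 - d) ^ 2 := by
        have h2 : ‖lam - (d : ℂ)‖ ^ 2 ≤ (1 - d) ^ 2 := by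
          apply pow_le_pow_left₀ (norm_nonneg _) hkey
        rwa [Complex.sq_norm] at h2
      have h3 : Complex.normSq (lam - (d : ℂ)) = (lam.re - d) ^ 2 + lam.im ^ 2 := by
        simp [Complex.normSq_apply, Complex.sub_re, Complex.sub_im]
        ring
      linarith [h3 ▸ h1]
    have hsq : lam.re ^ 2 + lam.im ^ 2 = 1 := by
      have := hnsq
      simp [Complex.normSq_apply] at this
      nlinarith [this]
    have hdpos : 0 < d := hRdiag i0
    have hre1 : 1 ≤ lam.re := by nlinarith
    have hre_le : lam.re ≤ 1 := by nlinarith [sq_nonneg lam.im]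
    have him : lam.im = 0 := by nlinarith
    have : lam.re = 1 := le_antisymm hre_le hre1
    exact Complex.ext this him
  -- x is a fixed vector of R, hence constant
  rw [hlam1] at heq2
  simp only [one_mul] at heq2
  have hre_fix : ∀ i, ∑ j, R i j * (x j).re = (x i).re := by
    intro i
    have := congrArg Complex.re (heq2 i)
    rw [Complex.re_sum] at this
    simpa [Complex.mul_re] using this
  have him_fix : ∀ i, ∑ j, R i j * (x j).im = (x i).im := by
    intro i
    have := congrArg Complex.im (heq2 i)
    rw [Complex.im_sum] at this
    simpa [Complex.mul_im] using this
  have hconst : ∀ i, x i = x r := by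
    intro i
    have h1 := fixed_const R hRnonneg hRrow hr (fun j => (x j).re) hre_fix i
    have h2 := fixed_const R hRnonneg hRrow hr (fun j => (x j).im) him_fix i
    exact Complex.ext h1 h2
  have hxr : ((n : ℝ) : ℂ) * x r = 0 := by
    rw [← husumC, Finset.sum_mul, ← hux]
    exact Finset.sum_congr rfl fun j _ => by rw [hconst j]
  have : x r = 0 := by
    rcases mul_eq_zero.1 hxr with h | h
    · exact absurd h hnC
    · exact h
  apply hx0
  funext i
  rw [hconst i, this]
  rfl

/-- All complex eigenvalues of `R − 𝟙uᵀ/n` and of `C − v𝟙ᵀ/n` have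
modulus strictly less than `1`. -/
theorem spectral_radii_lt_one {n : ℕ}
    (R C : Matrix (Fin n) (Fin n) ℝ) (u v : Fin n → ℝ)
    (hRnonneg : ∀ i j, 0 ≤ R i j) (hRrow : ∀ i, ∑ j, R i j = 1)
    (hRdiag : ∀ i, 0 < R i i) (hRtree : (rootSet R).Nonempty)
    (hu : ∀ i, 0 ≤ u i) (huR : Matrix.vecMul u R = u) (husum : ∑ i, u i = n)
    (hCnonneg : ∀ i j, 0 ≤ C i j) (hCcol : ∀ j, ∑ i, C i j = 1)
    (hCdiag : ∀ i, 0 < C i i) (hCtree : (rootSet Cᵀ).Nonempty)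
    (hv : ∀ i, 0 ≤ v i) (hCv : C.mulVec v = v) (hvsum : ∑ i, v i = n) :
    (∀ lam : ℂ,
      (((R - Matrix.of fun _ j => u j / n).map (fun t : ℝ => (t : ℂ))).charpoly).IsRoot lam →
        ‖lam‖ < 1) ∧
    (∀ lam : ℂ,
      (((C - Matrix.of fun i _ => v i / n).map (fun t : ℝ => (t : ℂ))).charpoly).IsRoot lam →
        ‖lam‖ < 1) := by
  constructor
  · exact main_lemma R u hRnonneg hRrow hRdiag hRtree hu huR husum
  · intro lam hroot
    have hT : (Cᵀ - Matrix.of fun _ j => v j / (n : ℝ)) = (C - Matrix.of fun i _ => v i / (n : ℝ))ᵀ := by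
      ext i j
      simp [Matrix.transpose_apply, Matrix.sub_apply, Matrix.of_apply]
    have hcp : (((Cᵀ - Matrix.of fun _ j => v j / (n : ℝ)).map (fun t : ℝ => (t : ℂ))).charpoly)
        = (((C - Matrix.of fun i _ => v i / (n : ℝ)).map (fun t : ℝ => (t : ℂ))).charpoly) := by
      rw [hT, Matrix.transpose_map, my_charpoly_transpose]
    refine main_lemma Cᵀ v (fun i j => hCnonneg j i) (fun i => hCcol i)
      (fun i => hCdiag i) hCtree hv ?_ hvsum lam ?_
    · rw [Matrix.vecMul_transpose, hCv]
    · rw [hcp]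
      exact hroot
end

section
/- Let each f_i : ℝᵖ → ℝ be μ-strongly convex with L-Lipschitz continuous gradient and x* the unique minimizer of ∑_i f_i. Let R ∈ ℝ^{n×n} be row-stochastic, u ∈ ℝⁿ nonnegative with uᵀR = uᵀ and uᵀ𝟙 = n; let v ∈ ℝⁿ be nonnegative with 𝟙ᵀv = n. Let 𝛂 = diag(α_1,…,α_n) with α_i ≥ 0, set ᾱ := max_i α_i and α′ := uᵀ𝛂v/n. Let N_R and N_C be norms on ℝⁿ with ‖z‖₂ ≤ N_R(z) and ‖z‖₂ ≤ N_C(z) for all z ∈ ℝⁿ, extended columnwise to ℝ^{n×p} as 𝒩_R, 𝒩_C. Let x, y ∈ ℝ^{n×p} satisfy 𝟙ᵀy = 𝟙ᵀ∇F(x); set x̄ := (1/n)xᵀu ∈ ℝᵖ, ȳ := (1/n)yᵀ𝟙 ∈ ℝᵖ, x⁺ := R(x − 𝛂y), and x̄⁺ := (1/n)(x⁺)ᵀu. If α′ ≤ 2/(μ+L), then ‖x̄⁺ − x*‖₂ ≤ (1 − α′μ)‖x̄ − x*‖₂ + (α′L/√n)·𝒩_R(x − 𝟙x̄ᵀ)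 + (ᾱ‖u‖₂/n)·𝒩_C(y − vȳᵀ). -/
open Matrix InnerProductSpace

/-- `N` is a norm on `ℝⁿ`. -/
def IsNormOn {n : ℕ} (N : (Fin n → ℝ) → ℝ) : Prop :=
  (∀ z, 0 ≤ N z) ∧ (∀ z, N z = 0 ↔ z = 0) ∧
  (∀ (c : ℝ) (z : Fin n → ℝ), N (c • z) = |c| * N z) ∧
  (∀ z w : Fin n → ℝ, N (z + w) ≤ N z + N w)

/-- Columnwise extension of a norm `N` on `ℝⁿ` to `n×p` matrices. -/
noncomputable def colNorm {n p : ℕ} (N : (Fin n → ℝ) → ℝ) (X : Matrix (Fin n) (Fin p) ℝ) : ℝ :=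
  Real.sqrt (∑ c, N (fun i => X i c) ^ 2)

/-- Euclidean norm. -/
noncomputable def e2 {p : ℕ} (a : Fin p → ℝ) : ℝ :=
  Real.sqrt (∑ c, a c ^ 2)


section CalcAux
variable {F : Type*} [NormedAddCommGroup F] [InnerProductSpace ℝ F] [CompleteSpace F]

lemma seg_bound (φ φ' : ℝ → ℝ) (hφ : ∀ t, HasDerivAt φ (φ' t) t)
    (c0 c1 : ℝ) (hb : ∀ t ∈ Set.Icc (0:ℝ) 1, φ' t ≤ c0 + c1 * t) :
    φ 1 ≤ φ 0 + c0 + c1 / 2 := by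
  set ψ : ℝ → ℝ := fun t => φ t - c0 * t - c1 * t ^ 2 / 2 with hψ
  have hψd : ∀ t, HasDerivAt ψ (φ' t - c0 - c1 * t) t := by
    intro t
    have h1 : HasDerivAt (fun t : ℝ => c0 * t) c0 t := by
      simpa using (hasDerivAt_id t).const_mul c0
    have h2 : HasDerivAt (fun t : ℝ => c1 * t ^ 2 / 2) (c1 * t) t := by
      have := ((hasDerivAt_pow 2 t).const_mul c1).div_const 2
      refine this.congr_deriv ?_
      ring
    exact ((hφ t).sub h1).sub h2
  have hanti : AntitoneOn ψ (Set.Icc 0 1) := by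
    apply antitoneOn_of_deriv_nonpos (convex_Icc 0 1)
    · exact continuousOn_of_forall_continuousAt fun t _ => (hψd t).continuousAt
    · intro t _
      exact (hψd t).differentiableAt.differentiableWithinAt
    · intro t ht
      rw [(hψd t).deriv]
      rw [interior_Icc] at ht
      have ht' : t ∈ Set.Icc (0:ℝ) 1 := Set.mem_Icc_of_Ioo ht
      linarith [hb t ht']
  have := hanti (Set.left_mem_Icc.2 zero_le_one) (Set.right_mem_Icc.2 zero_le_one) zero_le_one
  simp only [hψ] at this
  linarith

lemma line_hasDerivAt (h : F → ℝ) (h' : F → F) (hg : ∀ z, HasGradientAt h (h' z) z)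
    (a b : F) (t : ℝ) :
    HasDerivAt (fun s : ℝ => h (a + s • (b - a)))
      (inner ℝ (h' (a + t • (b - a))) (b - a) : ℝ) t := by
  have hγ : HasDerivAt (fun s : ℝ => a + s • (b - a)) (b - a) t := by
    simpa using ((hasDerivAt_id t).smul_const (b - a)).const_add a
  have hF := (hg (a + t • (b - a))).hasFDerivAt
  have := hF.comp_hasDerivAt t hγ
  simpa [toDual_apply_apply, Function.comp_def] using this

lemma grad_upper (h : F → ℝ) (h' : F → F) (hg : ∀ z, HasGradientAt h (h' z) z)
    (K : ℝ) (hlip : ∀ a b, ‖h' a - h' b‖ ≤ K * ‖a - b‖) (a b : F) :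
    h b ≤ h a + inner ℝ (h' a) (b - a) + K / 2 * ‖b - a‖ ^ 2 := by
  have key := seg_bound (fun s : ℝ => h (a + s • (b - a)))
    (fun s : ℝ => inner ℝ (h' (a + s • (b - a))) (b - a))
    (line_hasDerivAt h h' hg a b)
    (inner ℝ (h' a) (b - a)) (K * ‖b - a‖ ^ 2) ?_
  · simp only [zero_smul, add_zero, one_smul, add_sub_cancel] at key
    linarith
  · intro t ht
    have hcs : (inner ℝ (h' (a + t • (b - a)) - h' a) (b - a) : ℝ)
        ≤ ‖h' (a + t • (b - a)) - h' a‖ * ‖b - a‖ := real_inner_le_norm _ _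
    have hl : ‖h' (a + t • (b - a)) - h' a‖ ≤ K * (t * ‖b - a‖) := by
      have := hlip (a + t • (b - a)) a
      simpa [norm_smul, abs_of_nonneg ht.1, mul_assoc] using this
    have h2 : (inner ℝ (h' (a + t • (b - a)) - h' a) (b - a) : ℝ) ≤ K * ‖b - a‖ ^ 2 * t := by
      calc (inner ℝ (h' (a + t • (b - a)) - h' a) (b - a) : ℝ)
          ≤ ‖h' (a + t • (b - a)) - h' a‖ * ‖b - a‖ := hcs
        _ ≤ K * (t * ‖b - a‖) * ‖b - a‖ :=
            mul_le_mul_of_nonneg_right hl (norm_nonneg _)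
        _ = K * ‖b - a‖ ^ 2 * t := by ring
    have := inner_sub_left (𝕜 := ℝ) (h' (a + t • (b - a))) (h' a) (b - a)
    linarith [this ▸ h2]

lemma grad_lower (h : F → ℝ) (h' : F → F) (hg : ∀ z, HasGradientAt h (h' z) z)
    (m : ℝ) (hmono : ∀ a b, m * ‖a - b‖ ^ 2 ≤ (inner ℝ (h' a - h' b) (a - b) : ℝ)) (a b : F) :
    h a + inner ℝ (h' a) (b - a) + m / 2 * ‖b - a‖ ^ 2 ≤ h b := by
  have key := seg_bound (fun s : ℝ => - h (a + s • (b - a)))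
    (fun s : ℝ => - inner ℝ (h' (a + s • (b - a))) (b - a))
    (fun t => (line_hasDerivAt h h' hg a b t).neg)
    (- inner ℝ (h' a) (b - a)) (- (m * ‖b - a‖ ^ 2)) ?_
  · simp only [zero_smul, add_zero, one_smul, add_sub_cancel] at key
    linarith
  · intro t ht
    rcases eq_or_lt_of_le ht.1 with h0 | h0
    · simp [← h0]
    · have hm := hmono (a + t • (b - a)) a
      have he : (a + t • (b - a)) - a = t • (b - a) := by abel
      rw [he] at hm
      rw [norm_smul, real_inner_smul_right] at hm
      have hineq : m * t * ‖b - a‖ ^ 2 ≤ (inner ℝ (h' (a + t • (b - a)) - h' a) (b - a) : ℝ) := by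
        rw [Real.norm_eq_abs, abs_of_nonneg ht.1] at hm
        nlinarith [hm]
      have hexp := inner_sub_left (𝕜 := ℝ) (h' (a + t • (b - a))) (h' a) (b - a)
      rw [hexp] at hineq
      show -(inner ℝ (h' (a + t • (b - a))) (b - a) : ℝ) ≤ _
      linarith

lemma breg_coco (ht : F → ℝ) (ht' : F → F) (K : ℝ) (hKpos : 0 < K)
    (hupper : ∀ c d, ht d ≤ ht c + (inner ℝ (ht' c) (d - c) : ℝ) + K / 2 * ‖d - c‖ ^ 2)
    (hlower : ∀ c d, ht c + (inner ℝ (ht' c) (d - c) : ℝ) ≤ ht d) (c d : F) :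
    ‖ht' c - ht' d‖ ^ 2 ≤ K * (inner ℝ (ht' c - ht' d) (c - d) : ℝ) := by
  have hKne : K ≠ 0 := ne_of_gt hKpos
  have hbreg : ∀ c d : F, ht c + (inner ℝ (ht' c) (d - c) : ℝ)
      + 1 / (2 * K) * ‖ht' d - ht' c‖ ^ 2 ≤ ht d := by
    intro c d
    set Δ := ht' d - ht' c with hΔ
    have h1 := hupper d (d - K⁻¹ • Δ)
    have h2 := hlower c (d - K⁻¹ • Δ)
    have hzd : (d - K⁻¹ • Δ) - d = -(K⁻¹ • Δ) := by abel
    have hza : (d - K⁻¹ • Δ) - c = (d - c) - K⁻¹ • Δ := by abel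
    rw [hzd] at h1
    rw [hza] at h2
    have e1 : (inner ℝ (ht' d) (-(K⁻¹ • Δ)) : ℝ) = -(K⁻¹ * (inner ℝ (ht' d) Δ : ℝ)) := by
      rw [inner_neg_right, real_inner_smul_right]
    have e2 : ‖-(K⁻¹ • Δ)‖ ^ 2 = K⁻¹ ^ 2 * ‖Δ‖ ^ 2 := by
      rw [norm_neg, norm_smul, mul_pow, Real.norm_eq_abs, sq_abs]
    have e3 : (inner ℝ (ht' c) ((d - c) - K⁻¹ • Δ) : ℝ)
        = (inner ℝ (ht' c) (d - c) : ℝ) - K⁻¹ * (inner ℝ (ht' c) Δ : ℝ) := by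
      rw [inner_sub_right, real_inner_smul_right]
    have e4 : (inner ℝ (ht' d) Δ : ℝ) - (inner ℝ (ht' c) Δ : ℝ) = ‖Δ‖ ^ 2 := by
      rw [← inner_sub_left, ← hΔ, real_inner_self_eq_norm_sq]
    rw [e1, e2] at h1
    rw [e3] at h2
    have e5 : K / 2 * (K⁻¹ ^ 2 * ‖Δ‖ ^ 2) = 1 / (2 * K) * ‖Δ‖ ^ 2 := by
      field_simp
    have e6 : K⁻¹ * (inner ℝ (ht' d) Δ : ℝ) - K⁻¹ * (inner ℝ (ht' c) Δ : ℝ) = K⁻¹ * ‖Δ‖ ^ 2 := by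
      rw [← mul_sub, e4]
    have e7 : K⁻¹ * ‖Δ‖ ^ 2 = 2 * (1 / (2 * K) * ‖Δ‖ ^ 2) := by field_simp
    rw [e5] at h1
    linarith [h1, h2]
  have h1 := hbreg c d
  have h2 := hbreg d c
  have e1 : ‖ht' c - ht' d‖ ^ 2 = ‖ht' d - ht' c‖ ^ 2 := by rw [norm_sub_rev]
  have e2 : (inner ℝ (ht' c) (d - c) : ℝ) + (inner ℝ (ht' d) (c - d) : ℝ)
      = -(inner ℝ (ht' c - ht' d) (c - d) : ℝ) := by
    rw [inner_sub_left]
    have h3 : (inner ℝ (ht' c) (d - c) : ℝ) = -(inner ℝ (ht' c) (c - d) : ℝ) := by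
      rw [← inner_neg_right]; congr 1; abel
    rw [h3]; ring
  have hsum : -(inner ℝ (ht' c - ht' d) (c - d) : ℝ) + 1 / K * ‖ht' d - ht' c‖ ^ 2 ≤ 0 := by
    rw [← e2]
    have f1 : 1 / K * ‖ht' d - ht' c‖ ^ 2 = 2 * (1 / (2 * K) * ‖ht' d - ht' c‖ ^ 2) := by
      field_simp
    have f2 : 1 / (2 * K) * ‖ht' c - ht' d‖ ^ 2 = 1 / (2 * K) * ‖ht' d - ht' c‖ ^ 2 := by
      rw [e1]
    linarith [h1, h2, f1, f2]
  have e8 : 1 / K * ‖ht' d - ht' c‖ ^ 2 * K = ‖ht' d - ht' c‖ ^ 2 := by field_simp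
  nlinarith [mul_le_mul_of_nonneg_right hsum (le_of_lt hKpos), e8, e1]

lemma grad_combined (h : F → ℝ) (h' : F → F) (hg : ∀ z, HasGradientAt h (h' z) z)
    (σ Λ : ℝ) (hσ : 0 < σ) (hσΛ : σ ≤ Λ)
    (hmono : ∀ a b, σ * ‖a - b‖ ^ 2 ≤ (inner ℝ (h' a - h' b) (a - b) : ℝ))
    (hlip : ∀ a b, ‖h' a - h' b‖ ≤ Λ * ‖a - b‖) (a b : F) :
    ‖h' a - h' b‖ ^ 2 + σ * Λ * ‖a - b‖ ^ 2 ≤ (σ + Λ) * (inner ℝ (h' a - h' b) (a - b) : ℝ) := by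
  rcases eq_or_lt_of_le hσΛ with hEq | hLt
  · subst hEq
    have h1 := hmono a b
    have h2 := hlip a b
    have h4 := norm_nonneg (h' a - h' b)
    have h5 := norm_nonneg (a - b)
    nlinarith [sq_nonneg (‖h' a - h' b‖ - σ * ‖a - b‖)]
  · have hKpos : (0:ℝ) < Λ - σ := by linarith
    have hexp : ∀ c d : F, ‖d‖ ^ 2 = ‖c‖ ^ 2 + 2 * (inner ℝ c (d - c) : ℝ) + ‖d - c‖ ^ 2 := by
      intro c d
      have := norm_add_sq_real c (d - c)
      simpa using this
    have hiexp : ∀ c d : F, (inner ℝ (h' c - σ • c) (d - c) : ℝ)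
        = (inner ℝ (h' c) (d - c) : ℝ) - σ * (inner ℝ c (d - c) : ℝ) := by
      intro c d
      rw [inner_sub_left, real_inner_smul_left]
    have hupper : ∀ c d : F, (fun z => h z - σ / 2 * ‖z‖ ^ 2) d
        ≤ (fun z => h z - σ / 2 * ‖z‖ ^ 2) c
          + (inner ℝ ((fun z => h' z - σ • z) c) (d - c) : ℝ) + (Λ - σ) / 2 * ‖d - c‖ ^ 2 := by
      intro c d
      simp only
      have h1 := grad_upper h h' hg Λ hlip c d
      have h2 := hexp c d
      have h3 := hiexp c d
      rw [h3]
      have h2σ : σ / 2 * ‖d‖ ^ 2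
          = σ / 2 * ‖c‖ ^ 2 + σ * (inner ℝ c (d - c) : ℝ) + σ / 2 * ‖d - c‖ ^ 2 := by
        rw [h2]; ring
      have h4 : (Λ - σ) / 2 * ‖d - c‖ ^ 2 = Λ / 2 * ‖d - c‖ ^ 2 - σ / 2 * ‖d - c‖ ^ 2 := by ring
      linarith
    have hlower : ∀ c d : F, (fun z => h z - σ / 2 * ‖z‖ ^ 2) c
        + (inner ℝ ((fun z => h' z - σ • z) c) (d - c) : ℝ)
        ≤ (fun z => h z - σ / 2 * ‖z‖ ^ 2) d := by
      intro c d
      simp only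
      have h1 := grad_lower h h' hg σ hmono c d
      have h2 := hexp c d
      have h3 := hiexp c d
      rw [h3]
      have h2σ : σ / 2 * ‖d‖ ^ 2
          = σ / 2 * ‖c‖ ^ 2 + σ * (inner ℝ c (d - c) : ℝ) + σ / 2 * ‖d - c‖ ^ 2 := by
        rw [h2]; ring
      linarith
    have key := breg_coco (fun z => h z - σ / 2 * ‖z‖ ^ 2) (fun z => h' z - σ • z)
      (Λ - σ) hKpos hupper hlower a b
    have eΔ : (h' a - σ • a) - (h' b - σ • b) = (h' a - h' b) - σ • (a - b) := by
      rw [smul_sub]; abel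
    rw [eΔ] at key
    have e5 : ‖(h' a - h' b) - σ • (a - b)‖ ^ 2
        = ‖h' a - h' b‖ ^ 2 - 2 * (σ * (inner ℝ (h' a - h' b) (a - b) : ℝ))
          + σ ^ 2 * ‖a - b‖ ^ 2 := by
      rw [norm_sub_sq_real, real_inner_smul_right, norm_smul, Real.norm_eq_abs, mul_pow, sq_abs]
    have e6 : (inner ℝ ((h' a - h' b) - σ • (a - b)) (a - b) : ℝ)
        = (inner ℝ (h' a - h' b) (a - b) : ℝ) - σ * ‖a - b‖ ^ 2 := by
      rw [inner_sub_left, real_inner_smul_left, real_inner_self_eq_norm_sq]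
    rw [e5, e6] at key
    nlinarith [key]

lemma grad_contract (h : F → ℝ) (h' : F → F) (hg : ∀ z, HasGradientAt h (h' z) z)
    (σ Λ : ℝ) (hσ : 0 < σ) (hσΛ : σ ≤ Λ)
    (hmono : ∀ a b, σ * ‖a - b‖ ^ 2 ≤ (inner ℝ (h' a - h' b) (a - b) : ℝ))
    (hlip : ∀ a b, ‖h' a - h' b‖ ≤ Λ * ‖a - b‖)
    (β : ℝ) (hβ0 : 0 ≤ β) (hβ : β * (σ + Λ) ≤ 2) (a b : F) :
    ‖(a - β • h' a) - (b - β • h' b)‖ ≤ (1 - β * σ) * ‖a - b‖ := by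
  have key := grad_combined h h' hg σ Λ hσ hσΛ hmono hlip a b
  have hm := hmono a b
  have hcs : (inner ℝ (h' a - h' b) (a - b) : ℝ) ≤ ‖h' a - h' b‖ * ‖a - b‖ :=
    real_inner_le_norm _ _
  have hq : σ * ‖a - b‖ ≤ ‖h' a - h' b‖ := by
    rcases eq_or_lt_of_le (norm_nonneg (a - b)) with hr | hr
    · rw [← hr]; simp [norm_nonneg]
    · have h1 : σ * ‖a - b‖ * ‖a - b‖ ≤ ‖h' a - h' b‖ * ‖a - b‖ := by nlinarith
      exact le_of_mul_le_mul_right h1 hr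
  have hid : (a - β • h' a) - (b - β • h' b) = (a - b) - β • (h' a - h' b) := by
    rw [smul_sub]; abel
  rw [hid]
  have hsq : ‖(a - b) - β • (h' a - h' b)‖ ^ 2
      = ‖a - b‖ ^ 2 - 2 * (β * (inner ℝ (h' a - h' b) (a - b) : ℝ)) + β ^ 2 * ‖h' a - h' b‖ ^ 2 := by
    rw [norm_sub_sq_real, real_inner_smul_right, norm_smul, Real.norm_eq_abs, mul_pow, sq_abs]
    rw [real_inner_comm (a - b)]
  have hβσ : β * σ ≤ 1 := by nlinarith
  have t1 : 0 ≤ β * ((σ + Λ) * (inner ℝ (h' a - h' b) (a - b) : ℝ)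
      - (‖h' a - h' b‖ ^ 2 + σ * Λ * ‖a - b‖ ^ 2)) :=
    mul_nonneg hβ0 (by linarith)
  have t2 : 0 ≤ (β * (2 - β * (σ + Λ))) * (‖h' a - h' b‖ ^ 2 - σ ^ 2 * ‖a - b‖ ^ 2) := by
    apply mul_nonneg (mul_nonneg hβ0 (by linarith))
    nlinarith [hq, norm_nonneg (a - b), norm_nonneg (h' a - h' b),
      mul_nonneg hσ.le (norm_nonneg (a - b))]
  have hsq2 : ‖(a - b) - β • (h' a - h' b)‖ ^ 2 ≤ ((1 - β * σ) * ‖a - b‖) ^ 2 := by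
    rw [hsq]
    nlinarith [t1, t2, hσ, hσΛ]
  have hrhs : 0 ≤ (1 - β * σ) * ‖a - b‖ := mul_nonneg (by linarith) (norm_nonneg _)
  nlinarith [hsq2, norm_nonneg ((a - b) - β • (h' a - h' b)), hrhs]

end CalcAux

lemma e2_eq {p : ℕ} (a : Fin p → ℝ) :
    e2 a = ‖(WithLp.equiv 2 (Fin p → ℝ)).symm a‖ := by
  rw [EuclideanSpace.norm_eq, e2]
  congr 1
  exact Finset.sum_congr rfl fun c _ => by
    rw [WithLp.equiv_symm_apply, PiLp.toLp_apply, Real.norm_eq_abs, sq_abs]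

lemma e2_sq {p : ℕ} (a : Fin p → ℝ) : e2 a ^ 2 = ∑ c, a c ^ 2 := by
  rw [e2, Real.sq_sqrt]
  exact Finset.sum_nonneg fun c _ => sq_nonneg _

lemma euclid_normsq {p : ℕ} (a : EuclideanSpace ℝ (Fin p)) : ‖a‖ ^ 2 = ∑ c, a c ^ 2 := by
  rw [EuclideanSpace.norm_eq, Real.sq_sqrt (by positivity)]
  exact Finset.sum_congr rfl fun c _ => by rw [Real.norm_eq_abs, sq_abs]

lemma euclid_sum_apply {p : ℕ} {ι : Type*} (s : Finset ι)
    (w : ι → EuclideanSpace ℝ (Fin p)) (c : Fin p) :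
    (∑ i ∈ s, w i) c = ∑ i ∈ s, w i c := by
  classical
  induction s using Finset.induction_on with
  | empty => simp [PiLp.zero_apply]
  | insert _ _ hx ih => rw [Finset.sum_insert hx, Finset.sum_insert hx, PiLp.add_apply, ih]

lemma sum_hasGradient {F : Type*} [NormedAddCommGroup F] [InnerProductSpace ℝ F] [CompleteSpace F]
    {n : ℕ} (f : Fin n → F → ℝ) (G : Fin n → F → F)
    (hgrad : ∀ i z, HasGradientAt (f i) (G i z) z) (z : F) :
    HasGradientAt (fun w => ∑ i, f i w) (∑ i, G i z) z := by
  rw [hasGradientAt_iff_hasFDerivAt]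
  have h := HasFDerivAt.sum (fun i (_ : i ∈ Finset.univ) => (hgrad i z).hasFDerivAt)
  simpa [map_sum, Finset.sum_fn] using h


set_option maxHeartbeats 2000000 in
/-- One-step bound on the optimality gap of the weighted average iterate. -/
theorem push_pull_optimality_gap_bound {n p : ℕ} (hn : 0 < n)
    (f : Fin n → EuclideanSpace ℝ (Fin p) → ℝ)
    (G : Fin n → EuclideanSpace ℝ (Fin p) → EuclideanSpace ℝ (Fin p))
    (hgrad : ∀ i z, HasGradientAt (f i) (G i z) z)
    (μ L : ℝ) (hμ : 0 < μ) (hμL : μ ≤ L)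
    (hsc : ∀ i (a b : EuclideanSpace ℝ (Fin p)),
      μ * ‖a - b‖ ^ 2 ≤ (inner ℝ (G i a - G i b) (a - b) : ℝ))
    (hlip : ∀ i (a b : EuclideanSpace ℝ (Fin p)), ‖G i a - G i b‖ ≤ L * ‖a - b‖)
    (xstar : EuclideanSpace ℝ (Fin p))
    (hmin : ∀ z, ∑ i, f i xstar ≤ ∑ i, f i z)
    (R : Matrix (Fin n) (Fin n) ℝ)
    (hRnonneg : ∀ i j, 0 ≤ R i j) (hRrow : ∀ i, ∑ j, R i j = 1)
    (u : Fin n → ℝ) (hu : ∀ i, 0 ≤ u i) (huR : Matrix.vecMul u R = u) (husum : ∑ i, u i = n)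
    (v : Fin n → ℝ) (hv : ∀ i, 0 ≤ v i) (hvsum : ∑ i, v i = n)
    (α : Fin n → ℝ) (hα : ∀ i, 0 ≤ α i)
    (abar : ℝ) (habar₁ : ∀ i, α i ≤ abar) (habar₂ : ∃ i, α i = abar)
    (αp : ℝ) (hαp : αp = (∑ i, u i * (α i * v i)) / n)
    (NR NC : (Fin n → ℝ) → ℝ) (hNR : IsNormOn NR) (hNC : IsNormOn NC)
    (hNR2 : ∀ z, e2 z ≤ NR z) (hNC2 : ∀ z, e2 z ≤ NC z)
    (x y : Matrix (Fin n) (Fin p) ℝ)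
    (htrack : ∀ c, ∑ i, y i c = ∑ i, gradF G x i c)
    (xbar : Fin p → ℝ) (hxbar : xbar = (n : ℝ)⁻¹ • Matrix.vecMul u x)
    (ybar : Fin p → ℝ) (hybar : ybar = (n : ℝ)⁻¹ • Matrix.vecMul (fun _ => (1 : ℝ)) y)
    (xplus : Matrix (Fin n) (Fin p) ℝ) (hxplus : xplus = R * (x - Matrix.diagonal α * y))
    (xbarplus : Fin p → ℝ) (hxbarplus : xbarplus = (n : ℝ)⁻¹ • Matrix.vecMul u xplus)
    (hstep : αp ≤ 2 / (μ + L)) :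
    e2 (xbarplus - (fun c => xstar c)) ≤
      (1 - αp * μ) * e2 (xbar - (fun c => xstar c)) +
      (αp * L / Real.sqrt n) * colNorm NR (x - Matrix.of fun _ c => xbar c) +
      (abar * e2 u / n) * colNorm NC (y - Matrix.of fun i c => v i * ybar c) := by
  classical
  have hnR : (0:ℝ) < (n:ℝ) := by exact_mod_cast hn
  have hnne : (n:ℝ) ≠ 0 := ne_of_gt hnR
  have hL : 0 < L := lt_of_lt_of_le hμ hμL
  set X : Fin n → EuclideanSpace ℝ (Fin p) := fun i => WithLp.toLp 2 (x i) with hX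
  set xbE : EuclideanSpace ℝ (Fin p) := (WithLp.equiv 2 (Fin p → ℝ)).symm xbar with hxbE
  set S : EuclideanSpace ℝ (Fin p) → EuclideanSpace ℝ (Fin p) := fun z => ∑ i, G i z with hS
  have hSgrad : ∀ z, HasGradientAt (fun w => ∑ i, f i w) (S z) z := fun z =>
    sum_hasGradient f G hgrad z
  have hSsub : ∀ a b, S a - S b = ∑ i, (G i a - G i b) := by
    intro a b; rw [hS]; simp [Finset.sum_sub_distrib]
  have hSmono : ∀ a b, ((n:ℝ) * μ) * ‖a - b‖ ^ 2 ≤ (inner ℝ (S a - S b) (a - b) : ℝ) := by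
    intro a b
    rw [hSsub, sum_inner]
    calc ((n:ℝ) * μ) * ‖a - b‖ ^ 2 = ∑ _i : Fin n, μ * ‖a - b‖ ^ 2 := by
          rw [Finset.sum_const, Finset.card_univ, Fintype.card_fin, nsmul_eq_mul]; ring
      _ ≤ ∑ i, (inner ℝ (G i a - G i b) (a - b) : ℝ) := Finset.sum_le_sum fun i _ => hsc i a b
  have hSlip : ∀ a b, ‖S a - S b‖ ≤ ((n:ℝ) * L) * ‖a - b‖ := by
    intro a b
    rw [hSsub]
    calc ‖∑ i, (G i a - G i b)‖ ≤ ∑ i, ‖G i a - G i b‖ := norm_sum_le _ _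
      _ ≤ ∑ _i : Fin n, L * ‖a - b‖ := Finset.sum_le_sum fun i _ => hlip i a b
      _ = ((n:ℝ) * L) * ‖a - b‖ := by
          rw [Finset.sum_const, Finset.card_univ, Fintype.card_fin, nsmul_eq_mul]; ring
  have hSzero : S xstar = 0 := by
    have hloc : IsLocalMin (fun w => ∑ i, f i w) xstar := Filter.Eventually.of_forall hmin
    have h0 := hloc.hasFDerivAt_eq_zero (hSgrad xstar).hasFDerivAt
    have h2 := congrArg (toDual ℝ (EuclideanSpace ℝ (Fin p))).symm h0
    simpa using h2
  have hαp0 : 0 ≤ αp := by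
    rw [hαp]
    apply div_nonneg _ hnR.le
    exact Finset.sum_nonneg fun i _ => mul_nonneg (hu i) (mul_nonneg (hα i) (hv i))
  have habar0 : 0 ≤ abar := by
    obtain ⟨i, hi⟩ := habar₂; rw [← hi]; exact hα i
  have hybarc : ∀ c, ybar c = (n:ℝ)⁻¹ * ∑ i, y i c := by
    intro c; rw [hybar]; simp [Matrix.vecMul, dotProduct]
  have hxbarc : ∀ c, xbar c = (n:ℝ)⁻¹ * ∑ i, u i * x i c := by
    intro c; rw [hxbar]; simp [Matrix.vecMul, dotProduct]
  have hxbarplusc : ∀ c, xbarplus c = (n:ℝ)⁻¹ * ∑ j, u j * (x j c - α j * y j c) := by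
    intro c
    rw [hxbarplus, hxplus, ← Matrix.vecMul_vecMul, huR]
    simp [Matrix.vecMul, dotProduct, Matrix.sub_apply, Matrix.diagonal_mul, mul_sub]
  have hαpsum : ∑ i, u i * (α i * v i) = (n:ℝ) * αp := by rw [hαp]; field_simp
  have htrackc : ∀ c, ∑ i, y i c = ∑ i, (G i (X i)) c := by
    intro c
    simpa [gradF] using htrack c
  set β : ℝ := αp / n with hβ
  set T1 : EuclideanSpace ℝ (Fin p) := (xbE - β • S xbE) - xstar with hT1
  set T2 : EuclideanSpace ℝ (Fin p) := (-β) • (∑ i, (G i (X i) - G i xbE)) with hT2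
  set T3 : EuclideanSpace ℝ (Fin p) := (WithLp.equiv 2 (Fin p → ℝ)).symm
      (fun c => -(n:ℝ)⁻¹ * ∑ i, u i * α i * (y i c - v i * ybar c)) with hT3
  have hdecomp : (WithLp.equiv 2 (Fin p → ℝ)).symm (xbarplus - fun c => xstar c)
      = T1 + T2 + T3 := by
    apply PiLp.ext
    intro c
    rw [PiLp.add_apply, PiLp.add_apply, hT1, hT2, hT3]
    rw [PiLp.sub_apply, PiLp.sub_apply, PiLp.smul_apply, PiLp.smul_apply]
    rw [WithLp.equiv_symm_apply, PiLp.toLp_apply, PiLp.toLp_apply]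
    have hSc : S xbE c = ∑ i, (G i xbE) c := by
      rw [hS]; exact euclid_sum_apply _ _ _
    have hsumc : (∑ i, (G i (X i) - G i xbE)) c
        = (∑ i, (G i (X i)) c) - ∑ i, (G i xbE) c := by
      rw [euclid_sum_apply]
      simp only [PiLp.sub_apply]
      rw [Finset.sum_sub_distrib]
    have hxbEc : xbE c = xbar c := rfl
    rw [hSc, hsumc, hxbEc]
    simp only [Pi.sub_apply, smul_eq_mul]
    have e1 : ∑ i, u i * α i * (y i c - v i * ybar c)
        = (∑ i, u i * (α i * y i c)) - ((n:ℝ) * αp) * ybar c := by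
      rw [← hαpsum, Finset.sum_mul, ← Finset.sum_sub_distrib]
      exact Finset.sum_congr rfl fun i _ => by ring
    have e2 : ∑ j, u j * (x j c - α j * y j c)
        = (∑ j, u j * x j c) - ∑ j, u j * (α j * y j c) := by
      rw [← Finset.sum_sub_distrib]; exact Finset.sum_congr rfl fun i _ => by ring
    have e3 : ybar c = (n:ℝ)⁻¹ * ∑ i, G i (X i) c := by rw [hybarc c, htrackc c]
    rw [hxbarplusc c, e2, hxbarc c, e1, e3, hβ]
    field_simp
    ring
  -- Bound 1 : contraction
  have hb1 : ‖T1‖ ≤ (1 - αp * μ) * ‖xbE - xstar‖ := by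
    have hβ0 : 0 ≤ β := by rw [hβ]; positivity
    have hβ2 : β * ((n:ℝ) * μ + (n:ℝ) * L) ≤ 2 := by
      have h1 : β * ((n:ℝ) * μ + (n:ℝ) * L) = αp * (μ + L) := by
        rw [hβ]; field_simp
      have h2 : αp * (μ + L) ≤ 2 := by
        have := (le_div_iff₀ (by linarith : (0:ℝ) < μ + L)).mp hstep
        linarith
      linarith
    have hc := grad_contract (fun w => ∑ i, f i w) S hSgrad ((n:ℝ) * μ) ((n:ℝ) * L)
      (by positivity) (by nlinarith) hSmono hSlip β hβ0 hβ2 xbE xstar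
    rw [hSzero, smul_zero, sub_zero] at hc
    have he : 1 - β * ((n:ℝ) * μ) = 1 - αp * μ := by
      rw [hβ]; field_simp
    rw [he] at hc
    rw [hT1]
    exact hc
  -- Bound 2
  have hb2 : ‖T2‖ ≤ (αp * L / Real.sqrt n) * colNorm NR (x - Matrix.of fun _ c => xbar c) := by
    have hC0 : 0 ≤ colNorm NR (x - Matrix.of fun _ c => xbar c) := Real.sqrt_nonneg _
    have hA1 : ‖∑ i, (G i (X i) - G i xbE)‖ ≤ L * ∑ i, ‖X i - xbE‖ := by
      calc ‖∑ i, (G i (X i) - G i xbE)‖ ≤ ∑ i, ‖G i (X i) - G i xbE‖ := norm_sum_le _ _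
        _ ≤ ∑ i, L * ‖X i - xbE‖ := Finset.sum_le_sum fun i _ => hlip i _ _
        _ = L * ∑ i, ‖X i - xbE‖ := by rw [Finset.mul_sum]
    have hA2 : (∑ i, ‖X i - xbE‖) ^ 2 ≤ (n:ℝ) * ∑ i, ‖X i - xbE‖ ^ 2 := by
      have := sq_sum_le_card_mul_sum_sq (s := (Finset.univ : Finset (Fin n)))
        (f := fun i => ‖X i - xbE‖)
      simpa using this
    have hB : ∑ i, ‖X i - xbE‖ ^ 2 ≤ (colNorm NR (x - Matrix.of fun _ c => xbar c)) ^ 2 := by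
      have hrow : ∀ i, ‖X i - xbE‖ ^ 2 = ∑ c, (x i c - xbar c) ^ 2 := by
        intro i
        rw [euclid_normsq]
        exact Finset.sum_congr rfl fun c _ => by rw [PiLp.sub_apply]; rfl
      calc ∑ i, ‖X i - xbE‖ ^ 2 = ∑ i, ∑ c, (x i c - xbar c) ^ 2 :=
            Finset.sum_congr rfl fun i _ => hrow i
        _ = ∑ c, ∑ i, (x i c - xbar c) ^ 2 := Finset.sum_comm
        _ ≤ ∑ c, NR (fun i => (x - Matrix.of fun _ c => xbar c : Matrix (Fin n) (Fin p) ℝ) i c) ^ 2 := by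
            apply Finset.sum_le_sum
            intro c _
            have he : ∑ i, (x i c - xbar c) ^ 2
                = (e2 (fun i => (x - Matrix.of fun _ c => xbar c : Matrix (Fin n) (Fin p) ℝ) i c)) ^ 2 := by
              rw [e2_sq]
              exact Finset.sum_congr rfl fun i _ => by
                simp [Matrix.sub_apply]
            rw [he]
            exact pow_le_pow_left₀ (Real.sqrt_nonneg _) (hNR2 _) 2
        _ = (colNorm NR (x - Matrix.of fun _ c => xbar c)) ^ 2 := by
            rw [colNorm, Real.sq_sqrt]
            exact Finset.sum_nonneg fun c _ => sq_nonneg _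
    have hApos : 0 ≤ ∑ i, ‖X i - xbE‖ := Finset.sum_nonneg fun i _ => norm_nonneg _
    have hAC : ∑ i, ‖X i - xbE‖
        ≤ Real.sqrt n * colNorm NR (x - Matrix.of fun _ c => xbar c) := by
      have h1 : ∑ i, ‖X i - xbE‖
          ≤ Real.sqrt ((n:ℝ) * (colNorm NR (x - Matrix.of fun _ c => xbar c)) ^ 2) := by
        rw [← Real.sqrt_sq hApos]
        apply Real.sqrt_le_sqrt
        exact hA2.trans (mul_le_mul_of_nonneg_left hB hnR.le)
      rwa [Real.sqrt_mul hnR.le, Real.sqrt_sq hC0] at h1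
    have hT2n : ‖T2‖ = β * ‖∑ i, (G i (X i) - G i xbE)‖ := by
      rw [hT2, norm_smul, Real.norm_eq_abs, abs_neg, abs_of_nonneg (by rw [hβ]; positivity)]
    rw [hT2n]
    have hβ0 : 0 ≤ β := by rw [hβ]; positivity
    calc β * ‖∑ i, (G i (X i) - G i xbE)‖
        ≤ β * (L * (Real.sqrt n * colNorm NR (x - Matrix.of fun _ c => xbar c))) := by
          apply mul_le_mul_of_nonneg_left _ hβ0
          exact hA1.trans (mul_le_mul_of_nonneg_left hAC hL.le)
      _ = (αp * L / Real.sqrt n) * colNorm NR (x - Matrix.of fun _ c => xbar c) := by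
          have hsn : Real.sqrt n * Real.sqrt n = (n:ℝ) := Real.mul_self_sqrt hnR.le
          have hsnne : Real.sqrt n ≠ 0 := by
            intro h0
            rw [h0, mul_zero] at hsn
            exact hnne hsn.symm
          rw [hβ]
          field_simp
          linear_combination (αp * colNorm NR (x - Matrix.of fun _ c => xbar c)) * hsn
  -- Bound 3
  have hb3 : ‖T3‖ ≤ (abar * e2 u / n) * colNorm NC (y - Matrix.of fun i c => v i * ybar c) := by
    have hCD0 : 0 ≤ colNorm NC (y - Matrix.of fun i c => v i * ybar c) := Real.sqrt_nonneg _
    have hco : 0 ≤ abar * e2 u / n := by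
      apply div_nonneg (mul_nonneg habar0 (Real.sqrt_nonneg _)) hnR.le
    have he2u : (e2 u) ^ 2 = ∑ i, u i ^ 2 := e2_sq u
    have hT3sq : ‖T3‖ ^ 2 = ∑ c, ((n:ℝ)⁻¹ * ∑ i, u i * α i * (y i c - v i * ybar c)) ^ 2 := by
      rw [euclid_normsq]
      apply Finset.sum_congr rfl
      intro c _
      rw [hT3, WithLp.equiv_symm_apply, PiLp.toLp_apply]
      ring
    have hkey : ‖T3‖ ^ 2
        ≤ ((abar * e2 u / n) * colNorm NC (y - Matrix.of fun i c => v i * ybar c)) ^ 2 := by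
      rw [hT3sq]
      have hcolsq : (colNorm NC (y - Matrix.of fun i c => v i * ybar c)) ^ 2
          = ∑ c, NC (fun i => (y - Matrix.of fun i c => v i * ybar c : Matrix (Fin n) (Fin p) ℝ) i c) ^ 2 := by
        rw [colNorm, Real.sq_sqrt]
        exact Finset.sum_nonneg fun c _ => sq_nonneg _
      have hstep2 : ∀ c, ((n:ℝ)⁻¹ * ∑ i, u i * α i * (y i c - v i * ybar c)) ^ 2
          ≤ ((n:ℝ)⁻¹ ^ 2 * (abar ^ 2 * (e2 u) ^ 2))
            * NC (fun i => (y - Matrix.of fun i c => v i * ybar c : Matrix (Fin n) (Fin p) ℝ) i c) ^ 2 := by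
        intro c
        have hcs := Finset.sum_mul_sq_le_sq_mul_sq Finset.univ (fun i => u i * α i)
          (fun i => y i c - v i * ybar c)
        have h1 : ∑ i, (u i * α i) ^ 2 ≤ abar ^ 2 * ∑ i, u i ^ 2 := by
          rw [Finset.mul_sum]
          apply Finset.sum_le_sum
          intro i _
          have h1a : α i ^ 2 ≤ abar ^ 2 := pow_le_pow_left₀ (hα i) (habar₁ i) 2
          calc (u i * α i) ^ 2 = u i ^ 2 * α i ^ 2 := by ring
            _ ≤ u i ^ 2 * abar ^ 2 := mul_le_mul_of_nonneg_left h1a (sq_nonneg _)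
            _ = abar ^ 2 * u i ^ 2 := by ring
        have h2 : ∑ i, (y i c - v i * ybar c) ^ 2
            ≤ NC (fun i => (y - Matrix.of fun i c => v i * ybar c : Matrix (Fin n) (Fin p) ℝ) i c) ^ 2 := by
          have heq : ∑ i, (y i c - v i * ybar c) ^ 2
              = (e2 (fun i => (y - Matrix.of fun i c => v i * ybar c : Matrix (Fin n) (Fin p) ℝ) i c)) ^ 2 := by
            rw [e2_sq]
            exact Finset.sum_congr rfl fun i _ => by simp [Matrix.sub_apply]
          rw [heq]
          exact pow_le_pow_left₀ (Real.sqrt_nonneg _) (hNC2 _) 2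
        have h4 : (∑ i, u i * α i * (y i c - v i * ybar c)) ^ 2
            ≤ (abar ^ 2 * ∑ i, u i ^ 2)
              * NC (fun i => (y - Matrix.of fun i c => v i * ybar c : Matrix (Fin n) (Fin p) ℝ) i c) ^ 2 := by
          calc (∑ i, u i * α i * (y i c - v i * ybar c)) ^ 2
              ≤ (∑ i, (u i * α i) ^ 2) * ∑ i, (y i c - v i * ybar c) ^ 2 := hcs
            _ ≤ (abar ^ 2 * ∑ i, u i ^ 2)
                * NC (fun i => (y - Matrix.of fun i c => v i * ybar c : Matrix (Fin n) (Fin p) ℝ) i c) ^ 2 := by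
                apply mul_le_mul h1 h2
                · exact Finset.sum_nonneg fun i _ => sq_nonneg _
                · positivity
        rw [mul_pow, he2u]
        calc ((n:ℝ)⁻¹) ^ 2 * (∑ i, u i * α i * (y i c - v i * ybar c)) ^ 2
            ≤ ((n:ℝ)⁻¹) ^ 2 * ((abar ^ 2 * ∑ i, u i ^ 2)
              * NC (fun i => (y - Matrix.of fun i c => v i * ybar c : Matrix (Fin n) (Fin p) ℝ) i c) ^ 2) := by
              apply mul_le_mul_of_nonneg_left h4 (by positivity)
          _ = ((n:ℝ)⁻¹ ^ 2 * (abar ^ 2 * ∑ i, u i ^ 2))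
              * NC (fun i => (y - Matrix.of fun i c => v i * ybar c : Matrix (Fin n) (Fin p) ℝ) i c) ^ 2 := by ring
      calc ∑ c, ((n:ℝ)⁻¹ * ∑ i, u i * α i * (y i c - v i * ybar c)) ^ 2
          ≤ ∑ c, ((n:ℝ)⁻¹ ^ 2 * (abar ^ 2 * (e2 u) ^ 2))
            * NC (fun i => (y - Matrix.of fun i c => v i * ybar c : Matrix (Fin n) (Fin p) ℝ) i c) ^ 2 :=
            Finset.sum_le_sum fun c _ => hstep2 c
        _ = ((n:ℝ)⁻¹ ^ 2 * (abar ^ 2 * (e2 u) ^ 2))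
            * ∑ c, NC (fun i => (y - Matrix.of fun i c => v i * ybar c : Matrix (Fin n) (Fin p) ℝ) i c) ^ 2 := by
            rw [Finset.mul_sum]
        _ = ((abar * e2 u / n) * colNorm NC (y - Matrix.of fun i c => v i * ybar c)) ^ 2 := by
            rw [mul_pow, hcolsq]
            ring
    have h5 : ‖T3‖ = Real.sqrt (‖T3‖ ^ 2) := (Real.sqrt_sq (norm_nonneg _)).symm
    rw [h5]
    have h6 := Real.sqrt_le_sqrt hkey
    rwa [Real.sqrt_sq (mul_nonneg hco hCD0)] at h6
  -- Assembly
  have hEq1 : e2 (xbarplus - fun c => xstar c) = ‖T1 + T2 + T3‖ := by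
    rw [e2_eq, hdecomp]
  have hEq2 : e2 (xbar - fun c => xstar c) = ‖xbE - xstar‖ := by
    rw [e2_eq]
    congr 1
  rw [hEq1, hEq2]
  calc ‖T1 + T2 + T3‖ ≤ ‖T1‖ + ‖T2‖ + ‖T3‖ := norm_add₃_le
    _ ≤ (1 - αp * μ) * ‖xbE - xstar‖
        + (αp * L / Real.sqrt n) * colNorm NR (x - Matrix.of fun _ c => xbar c)
        + (abar * e2 u / n) * colNorm NC (y - Matrix.of fun i c => v i * ybar c) :=
      add_le_add (add_le_add hb1 hb2) hb3
end

section
/- Let M ∈ ℝ^{3×3} be nonnegative and irreducible (i.e., for every pair of distinct indices i, j there exist indices i = k₀, k₁, …, k_m = j with M_{k_t k_{t+1}} > 0 for all t), and let λ* > 0 satisfy M_{ii} < λ* for i = 1, 2, 3. Then the spectral radius of M (the maximum modulus of its complex eigenvalues) is strictly less than λ* if and only if det(λ*I − M) > 0. -/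
set_option maxHeartbeats 1000000

private lemma key_arith (m1 m2 m3 b c d e f g L t u0 u1 u2 : ℝ)
    (hb : 0 ≤ b) (hc : 0 ≤ c) (hd : 0 ≤ d) (he : 0 ≤ e) (hf : 0 ≤ f) (hg : 0 ≤ g)
    (hu0 : 0 ≤ u0) (hu1 : 0 ≤ u1) (hu2 : 0 ≤ u2)
    (hm1 : m1 < L) (hm2 : m2 < L) (hm3 : m3 < L) (ht : L ≤ t)
    (hD : 0 < (L-m1)*(L-m2)*(L-m3) - e*g*(L-m1) - b*d*(L-m3) - c*f*(L-m2) - b*e*f - c*d*g)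
    (h1 : t*u0 ≤ m1*u0 + b*u1 + c*u2)
    (h2 : t*u1 ≤ d*u0 + m2*u1 + e*u2)
    (h3 : t*u2 ≤ f*u0 + g*u1 + m3*u2) :
    u0 = 0 ∧ u1 = 0 ∧ u2 = 0 := by
  have hP : 0 < L - m1 := by linarith
  have hQ : 0 < L - m2 := by linarith
  have hR : 0 < L - m3 := by linarith
  have hp : 0 < t - m1 := by linarith
  have hq : 0 < t - m2 := by linarith
  have hr : 0 < t - m3 := by linarith
  have n1 : 0 ≤ b*d*(L-m3) := by positivity
  have n2 : 0 ≤ c*f*(L-m2) := by positivity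
  have n3 : 0 ≤ e*g*(L-m1) := by positivity
  have n4 : 0 ≤ b*e*f := by positivity
  have n5 : 0 ≤ c*d*g := by positivity
  -- 2x2 minors at L are positive
  have hA' : 0 < (L-m2)*(L-m3) - e*g := by
    have hx : 0 < (L-m1)*((L-m2)*(L-m3) - e*g) := by linarith [hD, n1, n2, n4, n5]
    by_contra h
    push_neg at h
    have := mul_nonpos_of_nonneg_of_nonpos hP.le h
    linarith
  have hB' : 0 < (L-m1)*(L-m2) - b*d := by
    have hx : 0 < (L-m3)*((L-m1)*(L-m2) - b*d) := by linarith [hD, n2, n3, n4, n5]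
    by_contra h
    push_neg at h
    have := mul_nonpos_of_nonneg_of_nonpos hR.le h
    linarith
  have hC' : 0 < (L-m1)*(L-m3) - c*f := by
    have hx : 0 < (L-m2)*((L-m1)*(L-m3) - c*f) := by linarith [hD, n1, n3, n4, n5]
    by_contra h
    push_neg at h
    have := mul_nonpos_of_nonneg_of_nonpos hQ.le h
    linarith
  -- monotonicity of minors
  have hqrmono : (L-m2)*(L-m3) ≤ (t-m2)*(t-m3) :=
    mul_le_mul (by linarith) (by linarith) hR.le hq.le
  have hpqmono : (L-m1)*(L-m2) ≤ (t-m1)*(t-m2) :=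
    mul_le_mul (by linarith) (by linarith) hQ.le hp.le
  have hprmono : (L-m1)*(L-m3) ≤ (t-m1)*(t-m3) :=
    mul_le_mul (by linarith) (by linarith) hR.le hp.le
  have hPmono : (L-m1)*(L-m2)*(L-m3) ≤ (t-m1)*(t-m2)*(t-m3) :=
    mul_le_mul hpqmono (by linarith) hR.le (mul_pos hp hq).le
  -- 2x2 minors at t
  have hA : 0 < (t-m2)*(t-m3) - e*g := by linarith
  have hB : 0 < (t-m1)*(t-m2) - b*d := by linarith
  have hC : 0 < (t-m1)*(t-m3) - c*f := by linarith
  -- determinant at t is positive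
  have hPQR : 0 < (L-m1)*((L-m2)*(L-m3)) := mul_pos hP (mul_pos hQ hR)
  have hid : ((t-m1)*(t-m2)*(t-m3) - e*g*(t-m1) - b*d*(t-m3) - c*f*(t-m2) - b*e*f - c*d*g)
        * ((L-m1)*((L-m2)*(L-m3)))
      = ((L-m1)*(L-m2)*(L-m3) - e*g*(L-m1) - b*d*(L-m3) - c*f*(L-m2) - b*e*f - c*d*g)
          * ((t-m1)*((t-m2)*(t-m3)))
        + (e*g*((t-m1)*(L-m1))) * ((t-m2)*(t-m3) - (L-m2)*(L-m3))
        + (b*d*((t-m3)*(L-m3))) * ((t-m1)*(t-m2) - (L-m1)*(L-m2))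
        + (c*f*((t-m2)*(L-m2))) * ((t-m1)*(t-m3) - (L-m1)*(L-m3))
        + (b*e*f + c*d*g) * ((t-m1)*(t-m2)*(t-m3) - (L-m1)*(L-m2)*(L-m3)) := by ring
  have hDt : 0 < (t-m1)*(t-m2)*(t-m3) - e*g*(t-m1) - b*d*(t-m3) - c*f*(t-m2) - b*e*f - c*d*g := by
    have hrhs1 : 0 < ((L-m1)*(L-m2)*(L-m3) - e*g*(L-m1) - b*d*(L-m3) - c*f*(L-m2) - b*e*f - c*d*g)
        * ((t-m1)*((t-m2)*(t-m3))) := mul_pos hD (mul_pos hp (mul_pos hq hr))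
    have hrhs2 : 0 ≤ (e*g*((t-m1)*(L-m1))) * ((t-m2)*(t-m3) - (L-m2)*(L-m3)) :=
      mul_nonneg (by positivity) (by linarith)
    have hrhs3 : 0 ≤ (b*d*((t-m3)*(L-m3))) * ((t-m1)*(t-m2) - (L-m1)*(L-m2)) :=
      mul_nonneg (by positivity) (by linarith)
    have hrhs4 : 0 ≤ (c*f*((t-m2)*(L-m2))) * ((t-m1)*(t-m3) - (L-m1)*(L-m3)) :=
      mul_nonneg (by positivity) (by linarith)
    have hrhs5 : 0 ≤ (b*e*f + c*d*g) * ((t-m1)*(t-m2)*(t-m3) - (L-m1)*(L-m2)*(L-m3)) :=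
      mul_nonneg (by positivity) (by linarith)
    have hx : 0 < ((t-m1)*(t-m2)*(t-m3) - e*g*(t-m1) - b*d*(t-m3) - c*f*(t-m2) - b*e*f - c*d*g)
        * ((L-m1)*((L-m2)*(L-m3))) := by rw [hid]; linarith
    by_contra h
    push_neg at h
    have := mul_nonpos_of_nonpos_of_nonneg h hPQR.le
    linarith
  have h1' : (t-m1)*u0 ≤ b*u1 + c*u2 := by linarith [h1]
  have h2' : (t-m2)*u1 ≤ d*u0 + e*u2 := by linarith [h2]
  have h3' : (t-m3)*u2 ≤ f*u0 + g*u1 := by linarith [h3]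
  -- eliminations for u0
  have e1 : ((t-m2)*(t-m3) - e*g) * u1 ≤ (d*(t-m3) + e*f) * u0 := by
    linarith [mul_le_mul_of_nonneg_left h2' hr.le, mul_le_mul_of_nonneg_left h3' he]
  have e2 : ((t-m2)*(t-m3) - e*g) * u2 ≤ ((t-m2)*f + d*g) * u0 := by
    linarith [mul_le_mul_of_nonneg_left h3' hq.le, mul_le_mul_of_nonneg_left h2' hg]
  have hu0z : u0 = 0 := by
    rcases eq_or_lt_of_le hu0 with h | h
    · exact h.symm
    · exfalso
      linarith [mul_le_mul_of_nonneg_left h1' hA.le, mul_le_mul_of_nonneg_left e1 hb,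
        mul_le_mul_of_nonneg_left e2 hc, mul_pos hDt h]
  -- eliminations for u1
  have f1 : ((t-m1)*(t-m3) - c*f) * u0 ≤ (b*(t-m3) + c*g) * u1 := by
    linarith [mul_le_mul_of_nonneg_left h1' hr.le, mul_le_mul_of_nonneg_left h3' hc]
  have f2 : ((t-m1)*(t-m3) - c*f) * u2 ≤ (b*f + (t-m1)*g) * u1 := by
    linarith [mul_le_mul_of_nonneg_left h3' hp.le, mul_le_mul_of_nonneg_left h1' hf]
  have hu1z : u1 = 0 := by
    rcases eq_or_lt_of_le hu1 with h | h
    · exact h.symm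
    · exfalso
      linarith [mul_le_mul_of_nonneg_left h2' hC.le, mul_le_mul_of_nonneg_left f1 hd,
        mul_le_mul_of_nonneg_left f2 he, mul_pos hDt h]
  -- eliminations for u2
  have g1 : ((t-m1)*(t-m2) - b*d) * u0 ≤ ((t-m2)*c + b*e) * u2 := by
    linarith [mul_le_mul_of_nonneg_left h1' hq.le, mul_le_mul_of_nonneg_left h2' hb]
  have g2 : ((t-m1)*(t-m2) - b*d) * u1 ≤ (d*c + (t-m1)*e) * u2 := by
    linarith [mul_le_mul_of_nonneg_left h2' hp.le, mul_le_mul_of_nonneg_left h1' hd]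
  have hu2z : u2 = 0 := by
    rcases eq_or_lt_of_le hu2 with h | h
    · exact h.symm
    · exfalso
      linarith [mul_le_mul_of_nonneg_left h3' hB.le, mul_le_mul_of_nonneg_left g1 hf,
        mul_le_mul_of_nonneg_left g2 hg, mul_pos hDt h]
  exact ⟨hu0z, hu1z, hu2z⟩

open Matrix Polynomial

private lemma eval_charpoly'' {R : Type*} [CommRing R] (M : Matrix (Fin 3) (Fin 3) R) (x : R) :
    (M.charpoly).eval x = (x • (1 : Matrix (Fin 3) (Fin 3) R) - M).det := by
  have h : (charmatrix M).map (evalRingHom x) = x • (1 : Matrix (Fin 3) (Fin 3) R) - M := by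
    ext i j
    by_cases hij : i = j
    · subst hij
      simp [charmatrix_apply, Matrix.one_apply, smul_eq_mul]
    · simp [charmatrix_apply_ne _ _ _ hij, Matrix.one_apply_ne hij, smul_eq_mul,
        Matrix.smul_apply, Matrix.sub_apply, Matrix.one_apply, hij]
  calc (M.charpoly).eval x = (evalRingHom x) (charmatrix M).det := rfl
    _ = ((charmatrix M).map (evalRingHom x)).det := by
        rw [← RingHom.mapMatrix_apply, ← RingHom.map_det]
    _ = _ := by rw [h]

private lemma charpoly_map_complex (M : Matrix (Fin 3) (Fin 3) ℝ) :
    (M.map (fun t : ℝ => (t : ℂ))).charpoly = M.charpoly.map Complex.ofRealHom := by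
  have : (fun t : ℝ => (t : ℂ)) = ⇑Complex.ofRealHom := rfl
  rw [this, Matrix.charpoly_map]

private lemma isRoot_map_complex (p : Polynomial ℝ) (x : ℝ) :
    (p.map Complex.ofRealHom).IsRoot (x : ℂ) ↔ p.IsRoot x := by
  rw [IsRoot, Polynomial.eval_map]
  show eval₂ Complex.ofRealHom (Complex.ofRealHom x) p = 0 ↔ _
  rw [Polynomial.eval₂_at_apply]
  simp [IsRoot]

/-- For a nonnegative irreducible `3×3` matrix `M` with diagonal entries
below `λ* > 0`, the spectral radius of `M` is strictly less than `λ*` iff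
`det(λ*I − M) > 0`. -/
theorem spectral_radius_lt_iff_det_pos
    (M : Matrix (Fin 3) (Fin 3) ℝ)
    (hMnonneg : ∀ i j, 0 ≤ M i j)
    (hirr : ∀ i j : Fin 3, i ≠ j → Relation.TransGen (fun a b => 0 < M a b) i j)
    (lamstar : ℝ) (hlam : 0 < lamstar)
    (hdiag : ∀ i, M i i < lamstar) :
    (∀ lam : ℂ, ((M.map (fun t : ℝ => (t : ℂ))).charpoly).IsRoot lam →
        ‖lam‖ < lamstar) ↔
      0 < (lamstar • (1 : Matrix (Fin 3) (Fin 3) ℝ) - M).det := by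
  constructor
  · intro h
    rw [← eval_charpoly'' M lamstar]
    have hne : ∀ x : ℝ, lamstar ≤ x → M.charpoly.eval x ≠ 0 := by
      intro x hx h0
      have hr : ‖(x : ℂ)‖ < lamstar := by
        apply h x
        rw [charpoly_map_complex]
        exact (isRoot_map_complex M.charpoly x).mpr h0
      rw [Complex.norm_real, Real.norm_eq_abs] at hr
      have := le_abs_self x
      linarith
    by_contra hle
    push_neg at hle
    have hlt : M.charpoly.eval lamstar < 0 := lt_of_le_of_ne hle (hne lamstar le_rfl)
    have hmonic : M.charpoly.Monic := M.charpoly_monic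
    have htend : Filter.Tendsto (fun x => M.charpoly.eval x) Filter.atTop Filter.atTop := by
      apply M.charpoly.tendsto_atTop_of_leadingCoeff_nonneg
      · rw [degree_eq_natDegree hmonic.ne_zero]
        have : M.charpoly.natDegree = 3 := by simpa using M.charpoly_natDegree_eq_dim
        rw [this]; norm_num
      · rw [hmonic.leadingCoeff]; norm_num
    obtain ⟨T, hT1, hT2⟩ :=
      ((htend.eventually_ge_atTop 1).and (Filter.eventually_ge_atTop lamstar)).exists
    have hmem : (0 : ℝ) ∈ Set.Icc (M.charpoly.eval lamstar) (M.charpoly.eval T) :=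
      ⟨hlt.le, by linarith⟩
    obtain ⟨x, hxI, hx0⟩ := intermediate_value_Icc hT2 (M.charpoly.continuous).continuousOn hmem
    exact hne x hxI.1 hx0
  · intro hdet lam hroot
    by_contra habs
    push_neg at habs
    set Mc := M.map (fun t : ℝ => (t : ℂ)) with hMc
    have hdet0 : (lam • (1 : Matrix (Fin 3) (Fin 3) ℂ) - Mc).det = 0 := by
      rw [← eval_charpoly'' Mc lam]
      exact hroot
    obtain ⟨v, hv, hMv⟩ := (Matrix.exists_mulVec_eq_zero_iff).mpr hdet0
    have heig : ∀ i, lam * v i = Mc i 0 * v 0 + Mc i 1 * v 1 + Mc i 2 * v 2 := by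
      intro i
      have h0 := congrFun hMv i
      rw [Matrix.sub_mulVec] at h0
      simp only [Matrix.smul_mulVec, Matrix.one_mulVec, Pi.sub_apply, Pi.smul_apply,
        Pi.zero_apply, smul_eq_mul, Matrix.mulVec, dotProduct,
        Fin.sum_univ_three] at h0
      have := sub_eq_zero.mp h0
      simpa using this
    have tri : ∀ a b c : ℂ, ‖a + b + c‖ ≤
        ‖a‖ + ‖b‖ + ‖c‖ := fun a b c =>
      (norm_add_le _ _).trans (add_le_add (norm_add_le _ _) le_rfl)
    have hineq : ∀ i, ‖lam‖ * ‖v i‖ ≤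
        M i 0 * ‖v 0‖ + M i 1 * ‖v 1‖ + M i 2 * ‖v 2‖ := by
      intro i
      calc ‖lam‖ * ‖v i‖ = ‖lam * v i‖ := (norm_mul _ _).symm
        _ = ‖Mc i 0 * v 0 + Mc i 1 * v 1 + Mc i 2 * v 2‖ := by rw [heig i]
        _ ≤ ‖Mc i 0 * v 0‖ + ‖Mc i 1 * v 1‖
              + ‖Mc i 2 * v 2‖ := tri _ _ _
        _ = M i 0 * ‖v 0‖ + M i 1 * ‖v 1‖
              + M i 2 * ‖v 2‖ := by
            simp [hMc, Matrix.map_apply, norm_mul, RCLike.norm_ofReal,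
              abs_of_nonneg (hMnonneg i 0), abs_of_nonneg (hMnonneg i 1),
              abs_of_nonneg (hMnonneg i 2)]
    have hdetexp : (lamstar • (1 : Matrix (Fin 3) (Fin 3) ℝ) - M).det =
        (lamstar - M 0 0)*(lamstar - M 1 1)*(lamstar - M 2 2)
        - M 1 2*M 2 1*(lamstar - M 0 0) - M 0 1*M 1 0*(lamstar - M 2 2)
        - M 0 2*M 2 0*(lamstar - M 1 1) - M 0 1*(M 1 2*M 2 0) - M 0 2*(M 1 0*M 2 1) := by
      rw [Matrix.det_fin_three]
      simp only [Matrix.sub_apply, Matrix.smul_apply, Matrix.one_apply, smul_eq_mul]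
      norm_num [Fin.ext_iff]
      ring
    have hD : 0 < (lamstar - M 0 0)*(lamstar - M 1 1)*(lamstar - M 2 2)
        - M 1 2*M 2 1*(lamstar - M 0 0) - M 0 1*M 1 0*(lamstar - M 2 2)
        - M 0 2*M 2 0*(lamstar - M 1 1) - M 0 1*(M 1 2*M 2 0) - M 0 2*(M 1 0*M 2 1) := by
      rw [← hdetexp]; exact hdet
    obtain ⟨h0, h1, h2⟩ := key_arith (M 0 0) (M 1 1) (M 2 2) (M 0 1) (M 0 2) (M 1 0)
      (M 1 2) (M 2 0) (M 2 1) lamstar ‖lam‖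
      ‖v 0‖ ‖v 1‖ ‖v 2‖
      (hMnonneg 0 1) (hMnonneg 0 2) (hMnonneg 1 0) (hMnonneg 1 2) (hMnonneg 2 0) (hMnonneg 2 1)
      (norm_nonneg _) (norm_nonneg _) (norm_nonneg _)
      (hdiag 0) (hdiag 1) (hdiag 2) habs
      (by linarith [hD]) (by linarith [hineq 0]) (by linarith [hineq 1]) (by linarith [hineq 2])
    apply hv
    funext i
    fin_cases i <;>
      simp only [Pi.zero_apply] <;>
      [exact norm_eq_zero.mp h0; exact norm_eq_zero.mp h1;
        exact norm_eq_zero.mp h2]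
end

section
/- Let T ∈ ℝ^{n×n} be such that I + T is nonnegative with positive diagonal entries, (I + T)𝟙 = 𝟙 (row-stochastic), and the induced digraph of I + T contains a spanning tree. Then 0 is an eigenvalue of T with algebraic multiplicity 1 (as a root of the characteristic polynomial of T over ℂ), and every other complex eigenvalue λ of T satisfies |λ + 1| < 1, i.e., lies strictly inside the unit circle centered at −1 in the complex plane. -/
open Matrix

open Matrix

variable {n : ℕ}

/-- If `M *ᵥ u = u` for a real stochastic matrix with a root `r`, then `u` attains its
maximum at `r`. -/
lemma max_at_root (M : Matrix (Fin n) (Fin n) ℝ)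
    (hnn : ∀ i j, 0 ≤ M i j) (hr : ∀ i, ∑ j, M i j = 1)
    (u : Fin n → ℝ) (hu : M *ᵥ u = u)
    (r : Fin n) (hroot : ∀ i, Relation.ReflTransGen (fun a b => 0 < M b a) r i) :
    ∀ i, u i ≤ u r := by
  have : Nonempty (Fin n) := ⟨r⟩
  obtain ⟨i0, hi0⟩ := Finite.exists_max u
  have hS : ∀ i, u i = u i0 → ∀ j, 0 < M i j → u j = u i0 := by
    intro i hi j hMj
    have h1 : ∑ k, M i k * u k = u i := congrFun hu i
    have h2 : ∑ k, M i k * u i0 = u i0 := by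
      rw [← Finset.sum_mul, hr i, one_mul]
    have hle : ∀ k ∈ Finset.univ, M i k * u k ≤ M i k * u i0 := fun k _ =>
      mul_le_mul_of_nonneg_left (hi0 k) (hnn i k)
    have heq : ∑ k, M i k * u k = ∑ k, M i k * u i0 := by rw [h1, h2, hi]
    have := (Finset.sum_eq_sum_iff_of_le hle).mp heq j (Finset.mem_univ j)
    exact le_antisymm (hi0 j) (le_of_mul_le_mul_left (le_of_eq this.symm) hMj)
  have hback : ∀ a b : Fin n, Relation.ReflTransGen (fun a b => 0 < M b a) a b →
      u b = u i0 → u a = u i0 := by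
    intro a b h
    induction h with
    | refl => exact id
    | tail _ hbc ih => exact fun hc => ih (hS _ hc _ hbc)
  have hur : u r = u i0 := hback r i0 (hroot i0) rfl
  intro i; rw [hur]; exact hi0 i

lemma const_of_fixed (M : Matrix (Fin n) (Fin n) ℝ)
    (hnn : ∀ i j, 0 ≤ M i j) (hr : ∀ i, ∑ j, M i j = 1)
    (u : Fin n → ℝ) (hu : M *ᵥ u = u)
    (r : Fin n) (hroot : ∀ i, Relation.ReflTransGen (fun a b => 0 < M b a) r i) :
    ∀ i, u i = u r := by
  have h1 := max_at_root M hnn hr u hu r hroot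
  have h2 := max_at_root M hnn hr (-u) (by rw [Matrix.mulVec_neg, hu]) r hroot
  intro i
  have := h2 i
  simp only [Pi.neg_apply, neg_le_neg_iff] at this
  exact le_antisymm (h1 i) this

lemma shift_le_zero (M : Matrix (Fin n) (Fin n) ℝ) [Nonempty (Fin n)]
    (hnn : ∀ i j, 0 ≤ M i j) (hr : ∀ i, ∑ j, M i j = 1)
    (u : Fin n → ℝ) (a : ℝ) (hu : M *ᵥ u = u + a • (fun _ : Fin n => (1:ℝ))) :
    a ≤ 0 := by
  obtain ⟨i0, hi0⟩ := Finite.exists_max u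
  have h1 : (M *ᵥ u) i0 ≤ u i0 := by
    show ∑ k, M i0 k * u k ≤ u i0
    calc ∑ k, M i0 k * u k ≤ ∑ k, M i0 k * u i0 :=
          Finset.sum_le_sum fun k _ => mul_le_mul_of_nonneg_left (hi0 k) (hnn i0 k)
      _ = u i0 := by rw [← Finset.sum_mul, hr i0, one_mul]
  rw [hu] at h1
  simp only [Pi.add_apply, Pi.smul_apply, smul_eq_mul, mul_one] at h1
  linarith

lemma shift_eq_zero (M : Matrix (Fin n) (Fin n) ℝ) [Nonempty (Fin n)]
    (hnn : ∀ i j, 0 ≤ M i j) (hr : ∀ i, ∑ j, M i j = 1)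
    (u : Fin n → ℝ) (a : ℝ) (hu : M *ᵥ u = u + a • (fun _ : Fin n => (1:ℝ))) :
    a = 0 := by
  have h1 := shift_le_zero M hnn hr u a hu
  have h2 := shift_le_zero M hnn hr (-u) (-a) (by
    rw [Matrix.mulVec_neg, hu]; funext i; simp; ring)
  linarith

lemma mulVec_map_re (M : Matrix (Fin n) (Fin n) ℝ) (v : Fin n → ℂ) :
    (fun i => (((M.map (fun t : ℝ => (t : ℂ))) *ᵥ v) i).re) = M *ᵥ (fun j => (v j).re) := by
  funext i
  simp only [Matrix.mulVec, dotProduct, Matrix.map_apply, Complex.re_sum,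
    Complex.re_ofReal_mul]

lemma mulVec_map_im (M : Matrix (Fin n) (Fin n) ℝ) (v : Fin n → ℂ) :
    (fun i => (((M.map (fun t : ℝ => (t : ℂ))) *ᵥ v) i).im) = M *ᵥ (fun j => (v j).im) := by
  funext i
  simp only [Matrix.mulVec, dotProduct, Matrix.map_apply, Complex.im_sum,
    Complex.im_ofReal_mul]

lemma complex_const_of_fixed (M : Matrix (Fin n) (Fin n) ℝ)
    (hnn : ∀ i j, 0 ≤ M i j) (hr : ∀ i, ∑ j, M i j = 1)
    (v : Fin n → ℂ) (hv : (M.map (fun t : ℝ => (t : ℂ))) *ᵥ v = v)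
    (r : Fin n) (hroot : ∀ i, Relation.ReflTransGen (fun a b => 0 < M b a) r i) :
    ∀ i, v i = v r := by
  have hre : M *ᵥ (fun j => (v j).re) = fun j => (v j).re := by
    rw [← mulVec_map_re, hv]
  have him : M *ᵥ (fun j => (v j).im) = fun j => (v j).im := by
    rw [← mulVec_map_im, hv]
  intro i
  have h1 := const_of_fixed M hnn hr _ hre r hroot i
  have h2 := const_of_fixed M hnn hr _ him r hroot i
  exact Complex.ext h1 h2

lemma complex_shift_eq_zero (M : Matrix (Fin n) (Fin n) ℝ) [Nonempty (Fin n)]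
    (hnn : ∀ i j, 0 ≤ M i j) (hr : ∀ i, ∑ j, M i j = 1)
    (v : Fin n → ℂ) (c : ℂ)
    (hv : (M.map (fun t : ℝ => (t : ℂ))) *ᵥ v = v + c • (fun _ : Fin n => (1 : ℂ))) :
    c = 0 := by
  have hre : M *ᵥ (fun j => (v j).re) = (fun j => (v j).re) + c.re • (fun _ : Fin n => (1:ℝ)) := by
    rw [← mulVec_map_re, hv]; funext i; simp
  have him : M *ᵥ (fun j => (v j).im) = (fun j => (v j).im) + c.im • (fun _ : Fin n => (1:ℝ)) := by
    rw [← mulVec_map_im, hv]; funext i; simp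
  exact Complex.ext (shift_eq_zero M hnn hr _ _ hre) (shift_eq_zero M hnn hr _ _ him)





lemma pow_ker_aux {R M : Type*} [CommRing R] [AddCommGroup M] [Module R M]
    (f : Module.End R M) (hsq : ∀ v, f (f v) = 0 → f v = 0) :
    ∀ (k : ℕ) (v : M), (f ^ k) v = 0 → f v = 0 := by
  intro k
  induction k with
  | zero =>
    intro v hv
    rw [pow_zero, Module.End.one_apply] at hv
    rw [hv, map_zero]
  | succ k ih =>
    intro v hv
    have h1 : (f ^ k) (f v) = 0 := by
      rw [← Module.End.mul_apply, ← pow_succ]; exact hv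
    exact hsq v (ih (f v) h1)


/-- If `I + T` is nonnegative row-stochastic with positive diagonal and its
induced digraph contains a spanning tree, then `0` is an eigenvalue of `T` of algebraic
multiplicity `1`, and every other complex eigenvalue `λ` of `T` satisfies `|λ + 1| < 1`. -/
theorem eigenvalues_of_T {n : ℕ}
    (T : Matrix (Fin n) (Fin n) ℝ)
    (hnonneg : ∀ i j, 0 ≤ (1 + T) i j)
    (hdiag : ∀ i, 0 < (1 + T) i i)
    (hrow : ∀ i, ∑ j, (1 + T) i j = 1)
    (htree : (rootSet (1 + T)).Nonempty) :
    (((T.map (fun t : ℝ => (t : ℂ))).charpoly).rootMultiplicity 0 = 1) ∧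
    (∀ lam : ℂ, ((T.map (fun t : ℝ => (t : ℂ))).charpoly).IsRoot lam → lam ≠ 0 →
      ‖lam + 1‖ < 1) := by
  obtain ⟨r, hroot⟩ := htree
  have hne : Nonempty (Fin n) := ⟨r⟩
  set M : Matrix (Fin n) (Fin n) ℝ := 1 + T with hMdef
  set A : Matrix (Fin n) (Fin n) ℂ := T.map (fun t : ℝ => (t : ℂ)) with hAdef
  have hmap : M.map (fun t : ℝ => (t : ℂ)) = 1 + A := by
    ext i j
    by_cases h : i = j <;>
      simp [Matrix.map_apply, hMdef, Matrix.one_apply, h, hAdef]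
  have hrel : ∀ v : Fin n → ℂ, (M.map (fun t : ℝ => (t : ℂ))) *ᵥ v = v + A *ᵥ v := by
    intro v
    rw [hmap, Matrix.add_mulVec, Matrix.one_mulVec]
  have hones0 : A *ᵥ (fun _ : Fin n => (1 : ℂ)) = 0 := by
    have h1 : (M.map (fun t : ℝ => (t : ℂ))) *ᵥ (fun _ : Fin n => (1 : ℂ))
        = (fun _ : Fin n => (1 : ℂ)) := by
      funext i
      show ∑ j, ((M.map (fun t : ℝ => (t : ℂ))) i j) * 1 = 1
      simp only [Matrix.map_apply, mul_one, ← Complex.ofReal_sum, hrow i, Complex.ofReal_one]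
    have := hrel (fun _ : Fin n => (1 : ℂ))
    rw [h1] at this
    exact (add_eq_left.mp this.symm)
  have hker_sub : ∀ v : Fin n → ℂ, A *ᵥ v = 0 →
      v = (v r) • (fun _ : Fin n => (1 : ℂ)) := by
    intro v hv
    have h1 : (M.map (fun t : ℝ => (t : ℂ))) *ᵥ v = v := by
      rw [hrel, hv, add_zero]
    funext i
    have := complex_const_of_fixed M hnonneg hrow v h1 r hroot i
    simp [this]
  have hsq : ∀ v : Fin n → ℂ, A *ᵥ (A *ᵥ v) = 0 → A *ᵥ v = 0 := by
    intro v hv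
    have h1 := hker_sub _ hv
    have h2 : (M.map (fun t : ℝ => (t : ℂ))) *ᵥ v
        = v + ((A *ᵥ v) r) • (fun _ : Fin n => (1 : ℂ)) := by
      rw [hrel, ← h1]
    have h3 := complex_shift_eq_zero M hnonneg hrow v _ h2
    rw [h1, h3, zero_smul]
  constructor
  · -- root multiplicity 1
    have hφc : A.charpoly = (Matrix.toLin' A).charpoly := by
      rw [← LinearMap.charpoly_toMatrix (Matrix.toLin' A) (Pi.basisFun ℂ (Fin n)),
        LinearMap.toMatrix_eq_toMatrix', LinearMap.toMatrix'_toLin']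
    rw [Polynomial.rootMultiplicity_eq_natTrailingDegree', hφc,
      ← LinearMap.finrank_maxGenEigenspace_zero_eq]
    have hgen : Module.End.maxGenEigenspace (Matrix.toLin' A) 0 = LinearMap.ker (Matrix.toLin' A) := by
      apply le_antisymm
      · intro v hv
        rw [Module.End.mem_maxGenEigenspace] at hv
        obtain ⟨k, hk⟩ := hv
        simp only [zero_smul, sub_zero] at hk
        rw [LinearMap.mem_ker]
        refine pow_ker_aux (Matrix.toLin' A) ?_ k v hk
        intro w hw
        simp only [Matrix.toLin'_apply] at hw ⊢
        exact hsq w hw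
      · intro v hv
        rw [LinearMap.mem_ker] at hv
        rw [Module.End.mem_maxGenEigenspace]
        exact ⟨1, by simpa using hv⟩
    have hks : LinearMap.ker (Matrix.toLin' A)
        = Submodule.span ℂ {(fun _ : Fin n => (1 : ℂ))} := by
      apply le_antisymm
      · intro v hv
        rw [LinearMap.mem_ker, Matrix.toLin'_apply] at hv
        rw [Submodule.mem_span_singleton]
        exact ⟨v r, (hker_sub v hv).symm⟩
      · rw [Submodule.span_le, Set.singleton_subset_iff]
        simpa [LinearMap.mem_ker, Matrix.toLin'_apply] using hones0
    have hone_ne : (fun _ : Fin n => (1 : ℂ)) ≠ 0 := by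
      intro h
      have := congrFun h r
      simp at this
    rw [hgen, hks, finrank_span_singleton hone_ne]
  · -- other eigenvalues
    intro lam hlam hlamne
    have hdet : (lam • (1 : Matrix (Fin n) (Fin n) ℂ) - A).det = 0 := by
      have h1 : Polynomial.eval lam A.charpoly = 0 := hlam
      rw [Matrix.charpoly] at h1
      have h2 : ((Polynomial.evalRingHom lam).mapMatrix (Matrix.charmatrix A)).det = 0 := by
        rw [← RingHom.map_det]; exact h1
      have h3 : (Polynomial.evalRingHom lam).mapMatrix (Matrix.charmatrix A)
          = lam • (1 : Matrix (Fin n) (Fin n) ℂ) - A := by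
        rw [RingHom.mapMatrix_apply]
        ext i j
        by_cases h : i = j
        · subst h
          simp [Matrix.charmatrix_apply_eq, Matrix.one_apply]
        · simp [Matrix.charmatrix_apply_ne _ _ _ h, Matrix.one_apply, h]
      rwa [h3] at h2
    obtain ⟨v, hv0, hv⟩ := (Matrix.exists_mulVec_eq_zero_iff).mpr hdet
    have hAv : A *ᵥ v = lam • v := by
      rw [Matrix.sub_mulVec, Matrix.smul_mulVec, Matrix.one_mulVec, sub_eq_zero] at hv
      exact hv.symm
    obtain ⟨i0, hi0⟩ := Finite.exists_max (fun i => ‖v i‖)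
    have hvpos : 0 < ‖v i0‖ := by
      obtain ⟨k, hk⟩ := Function.ne_iff.mp hv0
      exact lt_of_lt_of_le (norm_pos_iff.mpr hk) (hi0 k)
    set μ : ℂ := lam + 1 with hμdef
    have hrowv : ∑ j, ((M i0 j : ℂ)) * v j = μ * v i0 := by
      have h1 := congrFun (hrel v) i0
      rw [hAv] at h1
      have h2 : ((M.map (fun t : ℝ => (t : ℂ))) *ᵥ v) i0
          = ∑ j, ((M i0 j : ℂ)) * v j := by
        simp [Matrix.mulVec, dotProduct, Matrix.map_apply]
      rw [h2] at h1
      rw [h1]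
      simp [hμdef]
      ring
    set a : ℝ := M i0 i0 with hadef
    have ha0 : 0 < a := hdiag i0
    have ha1 : a ≤ 1 := by
      have := Finset.single_le_sum (f := fun j => M i0 j)
        (fun j _ => hnonneg i0 j) (Finset.mem_univ i0)
      rw [hrow i0] at this
      exact this
    have hsplit : ∑ j ∈ Finset.univ.erase i0, ((M i0 j : ℂ)) * v j = (μ - a) * v i0 := by
      have h1 : ((M i0 i0 : ℂ)) * v i0 + ∑ j ∈ Finset.univ.erase i0, ((M i0 j : ℂ)) * v j
          = ∑ j, ((M i0 j : ℂ)) * v j :=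
        Finset.add_sum_erase Finset.univ (fun j => ((M i0 j : ℂ)) * v j) (Finset.mem_univ i0)
      rw [hrowv] at h1
      have : ∑ j ∈ Finset.univ.erase i0, ((M i0 j : ℂ)) * v j
          = μ * v i0 - ((a : ℂ)) * v i0 := by
        rw [← h1, hadef]; ring
      rw [this]; ring
    have hsum_erase : ∑ j ∈ Finset.univ.erase i0, M i0 j = 1 - a := by
      rw [Finset.sum_erase_eq_sub (Finset.mem_univ i0), hrow i0]
    have habs : ‖μ - a‖ ≤ 1 - a := by
      have h1 : ‖(μ - a) * v i0‖
          ≤ ∑ j ∈ Finset.univ.erase i0, ‖((M i0 j : ℂ)) * v j‖ := by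
        rw [← hsplit]
        exact norm_sum_le _ _
      have h2 : ∀ j ∈ Finset.univ.erase i0,
          ‖((M i0 j : ℂ)) * v j‖ ≤ M i0 j * ‖v i0‖ := by
        intro j _
        rw [norm_mul, Complex.norm_real, Real.norm_eq_abs, abs_of_nonneg (hnonneg i0 j)]
        exact mul_le_mul_of_nonneg_left (hi0 j) (hnonneg i0 j)
      have h3 : ‖(μ - a) * v i0‖ ≤ (1 - a) * ‖v i0‖ := by
        calc ‖(μ - a) * v i0‖
            ≤ ∑ j ∈ Finset.univ.erase i0, ‖((M i0 j : ℂ)) * v j‖ := h1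
          _ ≤ ∑ j ∈ Finset.univ.erase i0, M i0 j * ‖v i0‖ :=
              Finset.sum_le_sum h2
          _ = (1 - a) * ‖v i0‖ := by rw [← Finset.sum_mul, hsum_erase]
      rw [norm_mul] at h3
      exact le_of_mul_le_mul_right h3 hvpos
    have h1a : (0:ℝ) ≤ 1 - a := le_trans (norm_nonneg _) habs
    have h2 : (μ.re - a)^2 + μ.im^2 ≤ (1 - a)^2 := by
      have hsq' : ‖μ - a‖ ^ 2 ≤ (1 - a)^2 :=
        pow_le_pow_left₀ (norm_nonneg _) habs 2
      rw [Complex.sq_norm, Complex.normSq_apply, Complex.sub_re, Complex.sub_im,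
        Complex.ofReal_re, Complex.ofReal_im] at hsq'
      nlinarith [hsq']
    have hne1 : ¬(μ.re = 1 ∧ μ.im = 0) := by
      rintro ⟨hx, hy⟩
      apply hlamne
      have hμ1 : μ = 1 := Complex.ext (by simpa using hx) (by simpa using hy)
      have : lam = μ - 1 := by rw [hμdef]; ring
      rw [this, hμ1, sub_self]
    have hpos : 0 < (μ.re - 1)^2 + μ.im^2 := by
      rcases eq_or_ne μ.re 1 with h | h
      · have hy : μ.im ≠ 0 := fun hy => hne1 ⟨h, hy⟩
        have h1 : 0 < μ.im^2 := by positivity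
        nlinarith [sq_nonneg (μ.re - 1)]
      · have h1 : 0 < (μ.re - 1)^2 := by
          have := sub_ne_zero.mpr h
          positivity
        nlinarith [sq_nonneg μ.im]
    have hgoal : μ.re^2 + μ.im^2 < 1 := by
      nlinarith [h2, hpos, ha0, ha1]
    have habsμ : ‖μ‖ ^ 2 < 1 := by
      rw [Complex.sq_norm, Complex.normSq_apply]
      nlinarith [hgoal]
    show ‖μ‖ < 1
    nlinarith [norm_nonneg μ, habsμ]
end

section
/- Let Ω be a finite set with probability weights w : Ω → [0,1], ∑_{ω} w(ω) = 1. Let R : Ω → ℝ^{n×n} satisfy R(ω)𝟙 = 𝟙 for every ω, let R̄ := ∑_{ω} w(ω) R(ω), and let ū ∈ ℝⁿ satisfy ūᵀR̄ = ūᵀ and ūᵀ𝟙 = n. Then for any matrix S ∈ ℝ^{n×n} and any x ∈ ℝⁿ, writing x̄ := ūᵀx/n, the following exact bias–variance decomposition holds: ∑_{ω} w(ω)·‖S(I − 𝟙ūᵀ/n)R(ω)x‖₂² = ‖S(R̄ − 𝟙ūᵀ/n)(x − x̄𝟙)‖₂² + ∑_{ω} w(ω)·‖S(I − 𝟙ūᵀ/n)(R(ω)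 − R̄)(x − x̄𝟙)‖₂². -/
open Matrix

/-- Squared Euclidean norm on `ℝⁿ`. -/
def e2sq {n : ℕ} (z : Fin n → ℝ) : ℝ := ∑ i, z i ^ 2

/-- Exact bias–variance decomposition for the row-stochastic random
mixing step: `E‖S(I − 𝟙ūᵀ/n)R(ω)x‖₂² = ‖S(R̄ − 𝟙ūᵀ/n)(x − x̄𝟙)‖₂²
+ E‖S(I − 𝟙ūᵀ/n)(R(ω) − R̄)(x − x̄𝟙)‖₂²`. -/
theorem bias_variance_row_stochastic {n : ℕ}
    {Ω : Type*} [Fintype Ω]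
    (w : Ω → ℝ) (hw0 : ∀ ω, 0 ≤ w ω) (hw1 : ∀ ω, w ω ≤ 1) (hwsum : ∑ ω, w ω = 1)
    (R : Ω → Matrix (Fin n) (Fin n) ℝ)
    (hR : ∀ ω, (R ω).mulVec (fun _ => (1 : ℝ)) = fun _ => (1 : ℝ))
    (Rbar : Matrix (Fin n) (Fin n) ℝ) (hRbar : Rbar = ∑ ω, w ω • R ω)
    (ubar : Fin n → ℝ) (hubar : Matrix.vecMul ubar Rbar = ubar) (husum : ∑ i, ubar i = n)
    (S : Matrix (Fin n) (Fin n) ℝ) (x : Fin n → ℝ)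
    (xbar : ℝ) (hxbar : xbar = (∑ i, ubar i * x i) / n) :
    ∑ ω, w ω * e2sq ((S * (1 - Matrix.of fun _ j => ubar j / n) * R ω).mulVec x) =
      e2sq ((S * (Rbar - Matrix.of fun _ j => ubar j / n)).mulVec (fun i => x i - xbar)) +
      ∑ ω, w ω * e2sq ((S * (1 - Matrix.of fun _ j => ubar j / n) * (R ω - Rbar)).mulVec
        (fun i => x i - xbar)) := by
  classical
  rcases Nat.eq_zero_or_pos n with hn | hn
  · subst hn
    simp [e2sq]
  have hn0 : (n : ℝ) ≠ 0 := by positivity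
  set J : Matrix (Fin n) (Fin n) ℝ := Matrix.of fun _ j => ubar j / n with hJdef
  set v : Fin n → ℝ := fun i => x i - xbar with hv
  -- J * Rbar = J
  have hJRbar : J * Rbar = J := by
    ext i j
    have h := congrFun hubar j
    simp only [Matrix.vecMul, dotProduct] at h
    simp only [hJdef, Matrix.mul_apply, Matrix.of_apply]
    rw [← h, Finset.sum_div]
    exact Finset.sum_congr rfl fun k _ => by ring
  -- J annihilates constants against (1 - J)
  have hJones : J.mulVec (fun _ => (1 : ℝ)) = fun _ => (1 : ℝ) := by
    funext i
    simp only [Matrix.mulVec, dotProduct, hJdef, Matrix.of_apply, mul_one]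
    rw [← Finset.sum_div, husum, div_self hn0]
  have hones : ∀ ω, (S * (1 - J) * R ω).mulVec (fun _ => (1 : ℝ)) = 0 := by
    intro ω
    rw [← Matrix.mulVec_mulVec, hR ω, ← Matrix.mulVec_mulVec]
    rw [Matrix.sub_mulVec, Matrix.one_mulVec, hJones]
    simp
  set A : Matrix (Fin n) (Fin n) ℝ := S * (Rbar - J) with hA
  set B : Ω → Matrix (Fin n) (Fin n) ℝ := fun ω => S * (1 - J) * (R ω - Rbar) with hB
  set a : Fin n → ℝ := A.mulVec v with ha
  set b : Ω → Fin n → ℝ := fun ω => (B ω).mulVec v with hb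
  -- key matrix decomposition
  have hmat : ∀ ω, S * (1 - J) * R ω = A + B ω := by
    intro ω
    have inner : (1 - J) * R ω = (Rbar - J) + (1 - J) * (R ω - Rbar) := by
      rw [sub_mul, sub_mul, one_mul, one_mul, mul_sub, hJRbar]
      abel
    rw [mul_assoc, inner, mul_add, hA, hB, ← mul_assoc]
  -- key vector decomposition
  have hkey : ∀ ω, (S * (1 - J) * R ω).mulVec x = a + b ω := by
    intro ω
    have hx : x = v + xbar • (fun _ => (1 : ℝ)) := by
      funext i
      simp [hv]
    rw [hx, Matrix.mulVec_add, Matrix.mulVec_smul, hones ω, smul_zero, add_zero,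
      hmat ω, Matrix.add_mulVec, ← ha]
  -- weighted sum of B is zero
  have hsum0 : ∑ ω, w ω • (R ω - Rbar) = 0 := by
    have : ∑ ω, w ω • (R ω - Rbar) = (∑ ω, w ω • R ω) - (∑ ω, w ω) • Rbar := by
      rw [Finset.sum_smul]
      rw [← Finset.sum_sub_distrib]
      exact Finset.sum_congr rfl fun ω _ => smul_sub _ _ _
    rw [this, hwsum, one_smul, ← hRbar, sub_self]
  have hb0 : ∀ i, ∑ ω, w ω * b ω i = 0 := by
    intro i
    have h1 : ∀ ω, w ω * b ω i = ((w ω • B ω).mulVec v) i := by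
      intro ω
      rw [Matrix.smul_mulVec]
      simp [hb]
    simp only [h1]
    have h2 : ∑ ω, ((w ω • B ω).mulVec v) i = ((∑ ω, w ω • B ω).mulVec v) i := by
      simp only [Matrix.mulVec, dotProduct]
      rw [Finset.sum_comm]
      refine Finset.sum_congr rfl fun j _ => ?_
      rw [Matrix.sum_apply, Finset.sum_mul]
    rw [h2]
    have h3 : ∑ ω, w ω • B ω = 0 := by
      have : ∀ ω, w ω • B ω = (S * (1 - J)) * (w ω • (R ω - Rbar)) := by
        intro ω
        simp only [hB]
        exact (mul_smul_comm _ _ _).symm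
      simp only [this]
      rw [← Finset.mul_sum, hsum0, mul_zero]
    rw [h3]
    simp
  -- put it together
  simp only [hkey]
  have expand : ∀ ω, w ω * e2sq (a + b ω) =
      w ω * e2sq a + (∑ i, 2 * a i * (w ω * b ω i)) + w ω * e2sq (b ω) := by
    intro ω
    simp only [e2sq, Pi.add_apply]
    rw [Finset.mul_sum, Finset.mul_sum, Finset.mul_sum, ← Finset.sum_add_distrib,
      ← Finset.sum_add_distrib]
    exact Finset.sum_congr rfl fun i _ => by ring
  simp only [expand]
  rw [Finset.sum_add_distrib, Finset.sum_add_distrib]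
  have hconst : ∑ ω, w ω * e2sq a = e2sq a := by
    rw [← Finset.sum_mul, hwsum, one_mul]
  have hcross : ∑ ω, ∑ i, 2 * a i * (w ω * b ω i) = 0 := by
    rw [Finset.sum_comm]
    apply Finset.sum_eq_zero
    intro i _
    rw [← Finset.mul_sum, hb0 i, mul_zero]
  rw [hconst, hcross, add_zero]
end

section
/- Let Ω be a finite set with probability weights w : Ω → [0,1], ∑_{ω} w(ω) = 1. Let C : Ω → ℝ^{n×n} satisfy 𝟙ᵀC(ω) = 𝟙ᵀ for every ω, let C̄ := ∑_{ω} w(ω) C(ω), and let v̄ ∈ ℝⁿ satisfy C̄v̄ = v̄ and 𝟙ᵀv̄ = n. Then for any matrix D ∈ ℝ^{n×n} and any y ∈ ℝⁿ, writing ȳ := 𝟙ᵀy/n, the following exact bias–variance decomposition holds: ∑_{ω} w(ω)·‖D(I − v̄𝟙ᵀ/n)C(ω)y‖₂² = ‖D(C̄ − v̄𝟙ᵀ/n)(y − ȳv̄)‖₂² + ∑_{ω} w(ω)·‖D(I − v̄𝟙ᵀ/n)(C(ω) − C̄)y‖₂². -/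
open Matrix

/-- Exact bias–variance decomposition for the column-stochastic random
mixing step: `E‖D(I − v̄𝟙ᵀ/n)C(ω)y‖₂² = ‖D(C̄ − v̄𝟙ᵀ/n)(y − ȳv̄)‖₂²
+ E‖D(I − v̄𝟙ᵀ/n)(C(ω) − C̄)y‖₂²`. -/
theorem bias_variance_column_stochastic {n : ℕ}
    {Ω : Type*} [Fintype Ω]
    (w : Ω → ℝ) (hw0 : ∀ ω, 0 ≤ w ω) (hw1 : ∀ ω, w ω ≤ 1) (hwsum : ∑ ω, w ω = 1)
    (C : Ω → Matrix (Fin n) (Fin n) ℝ)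
    (hC : ∀ ω, Matrix.vecMul (fun _ => (1 : ℝ)) (C ω) = fun _ => (1 : ℝ))
    (Cbar : Matrix (Fin n) (Fin n) ℝ) (hCbar : Cbar = ∑ ω, w ω • C ω)
    (vbar : Fin n → ℝ) (hvbar : Cbar.mulVec vbar = vbar) (hvsum : ∑ i, vbar i = n)
    (D : Matrix (Fin n) (Fin n) ℝ) (y : Fin n → ℝ)
    (ybar : ℝ) (hybar : ybar = (∑ i, y i) / n) :
    ∑ ω, w ω * e2sq ((D * (1 - Matrix.of fun i _ => vbar i / n) * C ω).mulVec y) =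
      e2sq ((D * (Cbar - Matrix.of fun i _ => vbar i / n)).mulVec
        (fun i => y i - ybar * vbar i)) +
      ∑ ω, w ω * e2sq ((D * (1 - Matrix.of fun i _ => vbar i / n) * (C ω - Cbar)).mulVec y) := by
  set K : Matrix (Fin n) (Fin n) ℝ := Matrix.of fun i _ => vbar i / n with hK
  -- column sums of Cbar are 1
  have hcol : ∀ ω (j : Fin n), ∑ k, C ω k j = 1 := by
    intro ω j
    have := congrFun (hC ω) j
    simpa [Matrix.vecMul, dotProduct] using this
  have hcolbar : ∀ j : Fin n, ∑ k, Cbar k j = 1 := by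
    intro j
    rw [hCbar]
    simp only [Matrix.sum_apply, Matrix.smul_apply, smul_eq_mul]
    rw [Finset.sum_comm]
    calc ∑ ω, ∑ k, w ω * C ω k j = ∑ ω, w ω * ∑ k, C ω k j := by
          simp [Finset.mul_sum]
      _ = 1 := by simp [hcol, hwsum]
  -- K * Cbar = K
  have hKC : K * Cbar = K := by
    ext i j
    have hnpos : (0:ℝ) < n := by exact_mod_cast i.pos
    simp only [Matrix.mul_apply, hK, Matrix.of_apply]
    rw [← Finset.mul_sum, hcolbar j, mul_one]
  -- (Cbar - K).mulVec vbar = 0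
  have hKv : K.mulVec vbar = vbar := by
    ext i
    have hn : (n:ℝ) ≠ 0 := by exact_mod_cast i.pos.ne'
    simp only [Matrix.mulVec, dotProduct, hK, Matrix.of_apply]
    rw [← Finset.mul_sum, hvsum, div_mul_cancel₀ _ hn]
  have hMv : (Cbar - K).mulVec vbar = 0 := by
    rw [Matrix.sub_mulVec, hvbar, hKv, sub_self]
  -- a = bias term
  set a : Fin n → ℝ := (D * (1 - K) * Cbar).mulVec y with ha
  have hbias : (D * (Cbar - K)).mulVec (fun i => y i - ybar * vbar i) = a := by
    have h1 : (1 - K) * Cbar = Cbar - K := by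
      rw [Matrix.sub_mul, Matrix.one_mul, hKC]
    have hv : (fun i => y i - ybar * vbar i) = y - ybar • vbar := by
      funext i; simp [Pi.sub_apply, Pi.smul_apply, smul_eq_mul]
    rw [hv, Matrix.mulVec_sub, ha, Matrix.mul_assoc, h1]
    have : (D * (Cbar - K)).mulVec (ybar • vbar) = 0 := by
      rw [Matrix.mulVec_smul, ← Matrix.mulVec_mulVec, hMv]
      simp
    rw [this, sub_zero]
  set b : Ω → Fin n → ℝ := fun ω => (D * (1 - K) * (C ω - Cbar)).mulVec y with hb
  -- decomposition of each term
  have hsplit : ∀ ω, (D * (1 - K) * C ω).mulVec y = a + b ω := by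
    intro ω
    rw [ha, hb, ← Matrix.add_mulVec, ← Matrix.mul_add, add_sub_cancel]
  have sum_mulVec : ∀ (M : Ω → Matrix (Fin n) (Fin n) ℝ),
      (∑ ω, M ω).mulVec y = ∑ ω, (M ω).mulVec y := by
    intro M; ext i
    simp only [Matrix.mulVec, dotProduct, Matrix.sum_apply, Finset.sum_apply, Finset.sum_mul]
    rw [Finset.sum_comm]
  -- expected b is zero
  have hEb : ∑ ω, w ω • b ω = 0 := by
    have : ∑ ω, w ω • b ω = (D * (1 - K) * (∑ ω, w ω • (C ω - Cbar))).mulVec y := by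
      rw [Matrix.mul_sum, sum_mulVec]
      refine Finset.sum_congr rfl fun ω _ => ?_
      rw [hb, Matrix.mul_smul, Matrix.smul_mulVec]
    rw [this]
    have hz : ∑ ω, w ω • (C ω - Cbar) = 0 := by
      simp only [smul_sub, Finset.sum_sub_distrib, ← hCbar, ← Finset.sum_smul, hwsum, one_smul,
        sub_self]
    rw [hz, Matrix.mul_zero, Matrix.zero_mulVec]
  -- compute
  have key : ∀ ω, e2sq (a + b ω) = e2sq a + 2 * (∑ i, a i * b ω i) + e2sq (b ω) := by
    intro ω
    simp only [e2sq, Pi.add_apply, add_sq, Finset.sum_add_distrib, Finset.mul_sum]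
    ring
  calc ∑ ω, w ω * e2sq ((D * (1 - K) * C ω).mulVec y)
      = ∑ ω, (w ω * e2sq a + w ω * (2 * ∑ i, a i * b ω i) + w ω * e2sq (b ω)) := by
        refine Finset.sum_congr rfl fun ω _ => ?_
        rw [hsplit ω, key ω]; ring
    _ = (∑ ω, w ω) * e2sq a + 2 * (∑ i, a i * (∑ ω, w ω • b ω) i) + ∑ ω, w ω * e2sq (b ω) := by
        simp only [Finset.sum_add_distrib, ← Finset.sum_mul, Finset.sum_apply, Pi.smul_apply,
          smul_eq_mul, Finset.mul_sum]
        congr 1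
        · congr 1
          rw [Finset.sum_comm]
          refine Finset.sum_congr rfl fun ω _ => ?_
          refine Finset.sum_congr rfl fun i _ => ?_
          ring
    _ = e2sq a + ∑ ω, w ω * e2sq (b ω) := by
        rw [hwsum, one_mul, hEb]
        simp
    _ = e2sq ((D * (Cbar - K)).mulVec (fun i => y i - ybar * vbar i)) + ∑ ω, w ω * e2sq (b ω) := by
        rw [hbias]
end
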